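/- arXiv:1603.03671 — 10 statements merged into one kernel-verified Lean document; each statement's English description precedes it below -/
import Mathlib

section
/- Let R₁ and R₂ be countable simple graphs having property (R), let A ⊆ V(R₁) and B ⊆ V(R₂) be finite subsets, and let φ : A → B be an isomorphism between the subgraphs induced on A and B. Then φ extends to a graph isomorphism φ̄ : R₁ ≅ R₂, i.e. φ̄(a) = φ(a) for all a ∈ A. -/
/-- A simple graph has property (R) if for all disjoint finite subsets `U`, `W` of its
vertex set there exists a vertex outside `U ∪ W` adjacent to every vertex of `U` and to
no vertex of `W`. -/
def SimpleGraph.HasPropR {V : Type*} (G : SimpleGraph V) : Prop :=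
  ∀ U W : Finset V, Disjoint U W →
    ∃ z, z ∉ U ∧ z ∉ W ∧ (∀ u ∈ U, G.Adj z u) ∧ (∀ w ∈ W, ¬ G.Adj z w)

/-- A partial isomorphism between two graphs: a bijection between finite vertex sets
preserving adjacency, carrying an explicit inverse. -/
structure PartIso {V₁ V₂ : Type*} (R₁ : SimpleGraph V₁) (R₂ : SimpleGraph V₂) where
  s : Finset V₁
  t : Finset V₂
  f : V₁ → V₂
  g : V₂ → V₁
  maps : ∀ v ∈ s, f v ∈ t
  maps' : ∀ w ∈ t, g w ∈ s
  linv : ∀ v ∈ s, g (f v) = v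
  rinv : ∀ w ∈ t, f (g w) = w
  adj : ∀ u ∈ s, ∀ v ∈ s, R₁.Adj u v ↔ R₂.Adj (f u) (f v)

namespace PartIso

variable {V₁ V₂ : Type*} {R₁ : SimpleGraph V₁} {R₂ : SimpleGraph V₂}

/-- Extension order on partial isomorphisms. -/
def le (p q : PartIso R₁ R₂) : Prop :=
  p.s ⊆ q.s ∧ p.t ⊆ q.t ∧ (∀ v ∈ p.s, q.f v = p.f v) ∧ (∀ w ∈ p.t, q.g w = p.g w)

theorem le_refl (p : PartIso R₁ R₂) : p.le p :=
  ⟨subset_rfl, subset_rfl, fun _ _ => rfl, fun _ _ => rfl⟩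

theorem le_trans {p q r : PartIso R₁ R₂} (h₁ : p.le q) (h₂ : q.le r) : p.le r :=
  ⟨h₁.1.trans h₂.1, h₁.2.1.trans h₂.2.1,
   fun v hv => (h₂.2.2.1 v (h₁.1 hv)).trans (h₁.2.2.1 v hv),
   fun w hw => (h₂.2.2.2 w (h₁.2.1 hw)).trans (h₁.2.2.2 w hw)⟩

/-- The inverse of a partial isomorphism. -/
def symm (p : PartIso R₁ R₂) : PartIso R₂ R₁ where
  s := p.t
  t := p.s
  f := p.g
  g := p.f
  maps := p.maps'
  maps' := p.maps
  linv := p.rinv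
  rinv := p.linv
  adj := fun u hu v hv => by
    have h := p.adj (p.g u) (p.maps' u hu) (p.g v) (p.maps' v hv)
    rw [p.rinv u hu, p.rinv v hv] at h
    exact h.symm

theorem symm_le {p q : PartIso R₁ R₂} (h : p.le q) : p.symm.le q.symm :=
  ⟨h.2.1, h.1, h.2.2.2, h.2.2.1⟩

/-- The "forth" step: any vertex of the first graph can be added to the domain. -/
theorem forth (h₂ : R₂.HasPropR) (p : PartIso R₁ R₂) (v : V₁) :
    ∃ q : PartIso R₁ R₂, p.le q ∧ v ∈ q.s := by
  classical
  by_cases hv : v ∈ p.s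
  · exact ⟨p, p.le_refl, hv⟩
  set U : Finset V₂ := (p.s.filter (fun u => R₁.Adj v u)).image p.f with hU
  set W : Finset V₂ := (p.s.filter (fun u => ¬ R₁.Adj v u)).image p.f with hW
  have hdisj : Disjoint U W := by
    rw [Finset.disjoint_left]
    rintro x hxU hxW
    simp only [hU, hW, Finset.mem_image, Finset.mem_filter] at hxU hxW
    obtain ⟨u₁, ⟨hu₁, ha₁⟩, rfl⟩ := hxU
    obtain ⟨u₂, ⟨hu₂, ha₂⟩, he⟩ := hxW
    have : u₂ = u₁ := by rw [← p.linv u₂ hu₂, he, p.linv u₁ hu₁]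
    exact ha₂ (this ▸ ha₁)
  obtain ⟨z, hzU, hzW, hzadj, hznadj⟩ := h₂ U W hdisj
  have hzt : z ∉ p.t := by
    intro hz
    rcases em (R₁.Adj v (p.g z)) with ha | ha
    · exact hzU (Finset.mem_image.2 ⟨p.g z, Finset.mem_filter.2 ⟨p.maps' z hz, ha⟩, p.rinv z hz⟩)
    · exact hzW (Finset.mem_image.2 ⟨p.g z, Finset.mem_filter.2 ⟨p.maps' z hz, ha⟩, p.rinv z hz⟩)
  have key : ∀ u ∈ p.s, (R₁.Adj v u ↔ R₂.Adj z (p.f u)) := by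
    intro u hu
    constructor
    · intro ha
      exact hzadj _ (Finset.mem_image.2 ⟨u, Finset.mem_filter.2 ⟨hu, ha⟩, rfl⟩)
    · intro ha
      by_contra hna
      exact hznadj _ (Finset.mem_image.2 ⟨u, Finset.mem_filter.2 ⟨hu, hna⟩, rfl⟩) ha
  have upd_eq : Function.update p.f v z v = z := Function.update_self v z p.f
  have updg_eq : Function.update p.g z v z = v := Function.update_self z v p.g
  have upd_ne : ∀ u ∈ p.s, Function.update p.f v z u = p.f u := fun u hu =>
    Function.update_of_ne (fun h : u = v => hv (h ▸ hu)) z p.f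
  have updg_ne : ∀ w ∈ p.t, Function.update p.g z v w = p.g w := fun w hw =>
    Function.update_of_ne (fun h : w = z => hzt (h ▸ hw)) v p.g
  refine ⟨⟨insert v p.s, insert z p.t, Function.update p.f v z, Function.update p.g z v,
      ?_, ?_, ?_, ?_, ?_⟩, ⟨Finset.subset_insert _ _, Finset.subset_insert _ _,
      fun u hu => upd_ne u hu, fun w hw => updg_ne w hw⟩,
      Finset.mem_insert_self _ _⟩
  · intro u hu
    rcases Finset.mem_insert.1 hu with h | h
    · rw [h, upd_eq]; exact Finset.mem_insert_self _ _
    · rw [upd_ne u h]; exact Finset.mem_insert_of_mem (p.maps u h)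
  · intro w hw
    rcases Finset.mem_insert.1 hw with h | h
    · rw [h, updg_eq]; exact Finset.mem_insert_self _ _
    · rw [updg_ne w h]; exact Finset.mem_insert_of_mem (p.maps' w h)
  · intro u hu
    rcases Finset.mem_insert.1 hu with h | h
    · rw [h, upd_eq, updg_eq]
    · rw [upd_ne u h, updg_ne _ (p.maps u h), p.linv u h]
  · intro w hw
    rcases Finset.mem_insert.1 hw with h | h
    · rw [h, updg_eq, upd_eq]
    · rw [updg_ne w h, upd_ne _ (p.maps' w h), p.rinv w h]
  · intro u₁ hu₁ u₂ hu₂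
    rcases Finset.mem_insert.1 hu₁ with h₁ | h₁ <;>
      rcases Finset.mem_insert.1 hu₂ with h₂ | h₂
    · rw [h₁, h₂, upd_eq]; simp
    · rw [h₁, upd_eq, upd_ne u₂ h₂]; exact key u₂ h₂
    · rw [h₂, upd_ne u₁ h₁, upd_eq, R₁.adj_comm, R₂.adj_comm]
      exact key u₁ h₁
    · rw [upd_ne u₁ h₁, upd_ne u₂ h₂]; exact p.adj u₁ h₁ u₂ h₂

/-- The "back" step: any vertex of the second graph can be added to the range. -/
theorem back (h₁ : R₁.HasPropR) (p : PartIso R₁ R₂) (w : V₂) :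
    ∃ q : PartIso R₁ R₂, p.le q ∧ w ∈ q.t := by
  obtain ⟨q, hle, hw⟩ := p.symm.forth h₁ w
  exact ⟨q.symm, symm_le hle, hw⟩

end PartIso

theorem extension_of_partial_iso {V₁ V₂ : Type*} [Countable V₁] [Countable V₂]
    (R₁ : SimpleGraph V₁) (R₂ : SimpleGraph V₂)
    (h₁ : R₁.HasPropR) (h₂ : R₂.HasPropR)
    (A : Finset V₁) (B : Finset V₂) (φ : V₁ → V₂)
    (hbij : Set.BijOn φ (↑A : Set V₁) (↑B : Set V₂))
    (hiso : ∀ u ∈ A, ∀ v ∈ A, R₁.Adj u v ↔ R₂.Adj (φ u) (φ v)) :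
    ∃ ψ : R₁ ≃g R₂, ∀ a ∈ A, ψ a = φ a := by
  classical
  have hne₁ : Nonempty V₁ := by
    obtain ⟨z, _⟩ := h₁ ∅ ∅ (by simp); exact ⟨z⟩
  have hne₂ : Nonempty V₂ := by
    obtain ⟨z, _⟩ := h₂ ∅ ∅ (by simp); exact ⟨z⟩
  obtain ⟨e₁, he₁⟩ := exists_surjective_nat V₁
  obtain ⟨e₂, he₂⟩ := exists_surjective_nat V₂
  -- the starting partial isomorphism
  set p₀ : PartIso R₁ R₂ :=
    { s := A
      t := B
      f := φ
      g := Function.invFunOn φ (↑A)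
      maps := fun v hv => hbij.mapsTo hv
      maps' := fun w hw => hbij.surjOn.mapsTo_invFunOn hw
      linv := fun v hv => hbij.injOn.leftInvOn_invFunOn hv
      rinv := fun w hw => hbij.surjOn.rightInvOn_invFunOn hw
      adj := hiso } with hp₀
  -- the back-and-forth chain
  choose F1 hF1 hF1' using fun (p : PartIso R₁ R₂) (v : V₁) => p.forth h₂ v
  choose F2 hF2 hF2' using fun (p : PartIso R₁ R₂) (w : V₂) => p.back h₁ w
  set c : ℕ → PartIso R₁ R₂ :=
    fun n => Nat.rec p₀ (fun n p => F2 (F1 p (e₁ n)) (e₂ n)) n with hc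
  have hstep : ∀ n, (c n).le (c (n + 1)) :=
    fun n => PartIso.le_trans (hF1 (c n) (e₁ n)) (hF2 _ (e₂ n))
  have hmono : ∀ {m n : ℕ}, m ≤ n → (c m).le (c n) := by
    intro m n h
    induction n, h using Nat.le_induction with
    | base => exact PartIso.le_refl _
    | succ n hmn ih => exact PartIso.le_trans ih (hstep n)
  have hmem₁ : ∀ n, e₁ n ∈ (c (n + 1)).s :=
    fun n => (hF2 (F1 (c n) (e₁ n)) (e₂ n)).1 (hF1' (c n) (e₁ n))
  have hmem₂ : ∀ n, e₂ n ∈ (c (n + 1)).t :=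
    fun n => hF2' (F1 (c n) (e₁ n)) (e₂ n)
  -- the limit maps
  set F : V₁ → V₂ := fun v => (c ((he₁ v).choose + 1)).f v with hF
  set G : V₂ → V₁ := fun w => (c ((he₂ w).choose + 1)).g w with hG
  have hvmem : ∀ v : V₁, v ∈ (c ((he₁ v).choose + 1)).s := by
    intro v
    have := hmem₁ (he₁ v).choose
    rwa [(he₁ v).choose_spec] at this
  have hwmem : ∀ w : V₂, w ∈ (c ((he₂ w).choose + 1)).t := by
    intro w
    have := hmem₂ (he₂ w).choose
    rwa [(he₂ w).choose_spec] at this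
  have hFst : ∀ (v : V₁) (n : ℕ), v ∈ (c n).s → (c n).f v = F v ∧ F v ∈ (c n).t := by
    intro v n hv
    set m := (he₁ v).choose + 1
    have h1 : (c (max n m)).f v = (c n).f v := (hmono (le_max_left n m)).2.2.1 v hv
    have h2 : (c (max n m)).f v = (c m).f v := (hmono (le_max_right n m)).2.2.1 v (hvmem v)
    have : (c n).f v = F v := by rw [← h1, h2]
    exact ⟨this, this ▸ (c n).maps v hv⟩
  have hGst : ∀ (w : V₂) (n : ℕ), w ∈ (c n).t → (c n).g w = G w ∧ G w ∈ (c n).s := by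
    intro w n hw
    set m := (he₂ w).choose + 1
    have h1 : (c (max n m)).g w = (c n).g w := (hmono (le_max_left n m)).2.2.2 w hw
    have h2 : (c (max n m)).g w = (c m).g w := (hmono (le_max_right n m)).2.2.2 w (hwmem w)
    have : (c n).g w = G w := by rw [← h1, h2]
    exact ⟨this, this ▸ (c n).maps' w hw⟩
  have hleft : Function.LeftInverse G F := by
    intro v
    set n := (he₁ v).choose + 1
    have hv : v ∈ (c n).s := hvmem v
    have hf := hFst v n hv
    have hg := hGst (F v) n hf.2
    rw [← hg.1, ← hf.1, (c n).linv v hv]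
  have hright : Function.RightInverse G F := by
    intro w
    set n := (he₂ w).choose + 1
    have hw : w ∈ (c n).t := hwmem w
    have hg := hGst w n hw
    have hf := hFst (G w) n hg.2
    rw [← hf.1, ← hg.1, (c n).rinv w hw]
  have hadj : ∀ u v : V₁, R₂.Adj (F u) (F v) ↔ R₁.Adj u v := by
    intro u v
    set m := (he₁ u).choose + 1
    set k := (he₁ v).choose + 1
    have hu : u ∈ (c (max m k)).s := (hmono (le_max_left m k)).1 (hvmem u)
    have hv : v ∈ (c (max m k)).s := (hmono (le_max_right m k)).1 (hvmem v)
    have h := (c (max m k)).adj u hu v hv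
    rw [(hFst u _ hu).1, (hFst v _ hv).1] at h
    exact h.symm
  refine ⟨⟨⟨F, G, hleft, hright⟩, fun {u v} => hadj u v⟩, ?_⟩
  intro a ha
  have : a ∈ (c 0).s := ha
  have h := (hFst a 0 this).1
  exact h.symm.trans rfl
end

section
/- Any two countable simple graphs having property (R) are isomorphic. -/
section Aux

variable {A B : Type*} (G : SimpleGraph A) (H : SimpleGraph B)

attribute [local instance] Classical.decEq Classical.propDecidable

/-- `s` is a finite partial isomorphism from `G` to `H`. -/
def IsPIso (s : Finset (A × B)) : Prop :=
  ∀ p ∈ s, ∀ q ∈ s, (p.1 = q.1 ↔ p.2 = q.2) ∧ (G.Adj p.1 q.1 ↔ H.Adj p.2 q.2)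

lemma isPIso_swap {s : Finset (A × B)} (h : IsPIso G H s) :
    IsPIso H G (s.image Prod.swap) := by
  intro p hp q hq
  simp only [Finset.mem_image] at hp hq
  obtain ⟨p', hp', rfl⟩ := hp
  obtain ⟨q', hq', rfl⟩ := hq
  obtain ⟨e1, e2⟩ := h p' hp' q' hq'
  exact ⟨e1.symm, e2.symm⟩

lemma IsPIso.extend (hH : H.HasPropR) {s : Finset (A × B)} (hs : IsPIso G H s) (v : A) :
    ∃ w, IsPIso G H (insert (v, w) s) := by
  by_cases hv : ∃ w, (v, w) ∈ s
  · obtain ⟨w, hw⟩ := hv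
    exact ⟨w, by rwa [Finset.insert_eq_self.2 hw]⟩
  push_neg at hv
  set U := (s.filter (fun p : A × B => G.Adj v p.1)).image Prod.snd with hU
  set W := (s.filter (fun p : A × B => ¬ G.Adj v p.1)).image Prod.snd with hW
  have hdisj : Disjoint U W := by
    rw [Finset.disjoint_left]
    rintro b hbU hbW
    simp only [hU, hW, Finset.mem_image, Finset.mem_filter] at hbU hbW
    obtain ⟨p, ⟨hp, hpa⟩, rfl⟩ := hbU
    obtain ⟨q, ⟨hq, hqa⟩, hq2⟩ := hbW
    have e : p.1 = q.1 := (hs p hp q hq).1.2 hq2.symm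
    rw [e] at hpa
    exact hqa hpa
  obtain ⟨z, hzU, hzW, hzadj, hznadj⟩ := hH U W hdisj
  refine ⟨z, ?_⟩
  have key : ∀ q ∈ s, (v = q.1 ↔ z = q.2) ∧ (G.Adj v q.1 ↔ H.Adj z q.2) := by
    intro q hq
    have h1 : v ≠ q.1 := fun h => hv q.2 (by rw [h]; exact hq)
    by_cases ha : G.Adj v q.1
    · have hqU : q.2 ∈ U := Finset.mem_image_of_mem _ (Finset.mem_filter.2 ⟨hq, ha⟩)
      have h2 : z ≠ q.2 := fun h => hzU (h ▸ hqU)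
      exact ⟨⟨fun h => absurd h h1, fun h => absurd h h2⟩,
        iff_of_true ha (hzadj _ hqU)⟩
    · have hqW : q.2 ∈ W := Finset.mem_image_of_mem _ (Finset.mem_filter.2 ⟨hq, ha⟩)
      have h2 : z ≠ q.2 := fun h => hzW (h ▸ hqW)
      exact ⟨⟨fun h => absurd h h1, fun h => absurd h h2⟩,
        iff_of_false ha (hznadj _ hqW)⟩
  intro p hp q hq
  simp only [Finset.mem_insert] at hp hq
  rcases hp with rfl | hp <;> rcases hq with rfl | hq
  · exact ⟨by simp, by simp⟩
  · exact key q hq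
  · obtain ⟨e1, e2⟩ := key p hp
    exact ⟨eq_comm.trans (e1.trans eq_comm), (G.adj_comm _ _).trans (e2.trans (H.adj_comm _ _))⟩
  · exact hs p hp q hq

lemma IsPIso.extendRight (hG : G.HasPropR) {s : Finset (A × B)} (hs : IsPIso G H s) (w : B) :
    ∃ v, IsPIso G H (insert (v, w) s) := by
  obtain ⟨v, hv⟩ := IsPIso.extend H G hG (isPIso_swap G H hs) w
  refine ⟨v, ?_⟩
  have := isPIso_swap H G hv
  have e : (insert (w, v) (s.image Prod.swap)).image Prod.swap = insert (v, w) s := by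
    rw [Finset.image_insert, Finset.image_image, Prod.swap_swap_eq, Finset.image_id, Prod.swap_prod_mk]
  rwa [e] at this

variable (hG : G.HasPropR) (hH : H.HasPropR) (σ₁ : ℕ → A) (σ₂ : ℕ → B)

/-- The back-and-forth chain of partial isomorphisms. -/
noncomputable def pisoChain : ℕ → {s : Finset (A × B) // IsPIso G H s}
  | 0 => ⟨∅, fun p hp => absurd hp (Finset.notMem_empty p)⟩
  | n + 1 =>
    let s := pisoChain n
    let e1 := IsPIso.extend G H hH s.2 (σ₁ n)
    let e2 := IsPIso.extendRight G H hG e1.choose_spec (σ₂ n)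
    ⟨insert (e2.choose, σ₂ n) (insert (σ₁ n, e1.choose) s.1), e2.choose_spec⟩

lemma pisoChain_subset_succ (n : ℕ) :
    (pisoChain G H hG hH σ₁ σ₂ n).1 ⊆ (pisoChain G H hG hH σ₁ σ₂ (n + 1)).1 := by
  rw [pisoChain]
  exact (Finset.subset_insert _ _).trans (Finset.subset_insert _ _)

lemma pisoChain_mono {m n : ℕ} (h : m ≤ n) :
    (pisoChain G H hG hH σ₁ σ₂ m).1 ⊆ (pisoChain G H hG hH σ₁ σ₂ n).1 := by
  induction n with
  | zero => simp [Nat.le_zero.1 h]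
  | succ n ih =>
    rcases Nat.le_succ_iff.1 h with h' | rfl
    · exact (ih h').trans (pisoChain_subset_succ G H hG hH σ₁ σ₂ n)
    · exact Finset.Subset.refl _

lemma pisoChain_dom (n : ℕ) : ∃ b, (σ₁ n, b) ∈ (pisoChain G H hG hH σ₁ σ₂ (n + 1)).1 := by
  rw [pisoChain]
  exact ⟨_, Finset.mem_insert_of_mem (Finset.mem_insert_self _ _)⟩

lemma pisoChain_cod (n : ℕ) : ∃ a, (a, σ₂ n) ∈ (pisoChain G H hG hH σ₁ σ₂ (n + 1)).1 := by
  rw [pisoChain]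
  exact ⟨_, Finset.mem_insert_self _ _⟩

end Aux

/-- Any two countable simple graphs with property (R) are isomorphic. -/
theorem iso_of_hasPropR {V₁ V₂ : Type*} [Countable V₁] [Countable V₂]
    (R₁ : SimpleGraph V₁) (R₂ : SimpleGraph V₂)
    (h₁ : R₁.HasPropR) (h₂ : R₂.HasPropR) :
    Nonempty (R₁ ≃g R₂) := by
  have n₁ : Nonempty V₁ := ⟨(h₁ ∅ ∅ (by simp)).choose⟩
  have n₂ : Nonempty V₂ := ⟨(h₂ ∅ ∅ (by simp)).choose⟩
  obtain ⟨σ₁, hσ₁⟩ := exists_surjective_nat V₁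
  obtain ⟨σ₂, hσ₂⟩ := exists_surjective_nat V₂
  set c : ℕ → Finset (V₁ × V₂) := fun n => (pisoChain R₁ R₂ h₁ h₂ σ₁ σ₂ n).1 with hc
  have hpiso : ∀ n, IsPIso R₁ R₂ (c n) := fun n => (pisoChain R₁ R₂ h₁ h₂ σ₁ σ₂ n).2
  set r : V₁ → V₂ → Prop := fun a b => ∃ n, (a, b) ∈ c n with hr
  have compat : ∀ {a b a' b'}, r a b → r a' b' →
      (a = a' ↔ b = b') ∧ (R₁.Adj a a' ↔ R₂.Adj b b') := by
    rintro a b a' b' ⟨n, hn⟩ ⟨m, hm⟩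
    have hn' : (a, b) ∈ c (max n m) :=
      pisoChain_mono R₁ R₂ h₁ h₂ σ₁ σ₂ (le_max_left n m) hn
    have hm' : (a', b') ∈ c (max n m) :=
      pisoChain_mono R₁ R₂ h₁ h₂ σ₁ σ₂ (le_max_right n m) hm
    exact hpiso (max n m) _ hn' _ hm'
  have htot : ∀ a, ∃ b, r a b := by
    intro a
    obtain ⟨n, rfl⟩ := hσ₁ a
    obtain ⟨b, hb⟩ := pisoChain_dom R₁ R₂ h₁ h₂ σ₁ σ₂ n
    exact ⟨b, n + 1, hb⟩
  have hsur : ∀ b, ∃ a, r a b := by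
    intro b
    obtain ⟨n, rfl⟩ := hσ₂ b
    obtain ⟨a, ha⟩ := pisoChain_cod R₁ R₂ h₁ h₂ σ₁ σ₂ n
    exact ⟨a, n + 1, ha⟩
  set φ : V₁ → V₂ := fun a => (htot a).choose with hφdef
  have hφ : ∀ a, r a (φ a) := fun a => (htot a).choose_spec
  have hinj : Function.Injective φ := fun a a' h =>
    (compat (hφ a) (hφ a')).1.2 h
  have hsurj : Function.Surjective φ := by
    intro b
    obtain ⟨a, ha⟩ := hsur b
    exact ⟨a, (compat (hφ a) ha).1.1 rfl⟩
  exact ⟨{ toEquiv := Equiv.ofBijective φ ⟨hinj, hsurj⟩,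
           map_rel_iff' := fun {a b} => (compat (hφ a) (hφ b)).2.symm }⟩
end

section
/- Let R be a countable simple graph with property (R) and let U, W be disjoint finite sets of vertices of R. Then the subgraph induced on R_{U,W} := { z ∈ V(R) \ (U ∪ W) : z is adjacent to every vertex of U and to no vertex of W } is again a countable graph with property (R) (hence isomorphic to R). -/
/-- For disjoint finite sets `U`, `W` of vertices of a countable graph `R` with property (R),
the induced subgraph on the set of vertices outside `U ∪ W` adjacent to every vertex of `U`
and to no vertex of `W` again has property (R). -/
theorem hasPropR_induce_RUW {V : Type*} [Countable V]
    (R : SimpleGraph V) (hR : R.HasPropR) (U W : Finset V) (hUW : Disjoint U W) :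
    (R.induce {z : V | (z ∉ U ∧ z ∉ W) ∧ (∀ u ∈ U, R.Adj z u) ∧
      (∀ w ∈ W, ¬ R.Adj z w)}).HasPropR := by
  classical
  intro A B hAB
  have hdisj : Disjoint (U ∪ A.image Subtype.val) (W ∪ B.image Subtype.val) := by
    rw [Finset.disjoint_left]
    intro x hx hx'
    rcases Finset.mem_union.mp hx with hxU | hxA
    · rcases Finset.mem_union.mp hx' with hxW | hxB
      · exact Finset.disjoint_left.mp hUW hxU hxW
      · obtain ⟨⟨b, hbS⟩, _, rfl⟩ := Finset.mem_image.mp hxB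
        exact hbS.1.1 hxU
    · obtain ⟨⟨a, haS⟩, ha, rfl⟩ := Finset.mem_image.mp hxA
      rcases Finset.mem_union.mp hx' with hxW | hxB
      · exact haS.1.2 hxW
      · obtain ⟨⟨b, hbS⟩, hb, hba⟩ := Finset.mem_image.mp hxB
        rw [Subtype.ext hba] at hb
        exact Finset.disjoint_left.mp hAB ha hb
  obtain ⟨z, hzU, hzW, hadj, hnadj⟩ := hR _ _ hdisj
  have hzS : z ∈ {z : V | (z ∉ U ∧ z ∉ W) ∧ (∀ u ∈ U, R.Adj z u) ∧
      (∀ w ∈ W, ¬ R.Adj z w)} :=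
    ⟨⟨fun h => hzU (Finset.mem_union_left _ h), fun h => hzW (Finset.mem_union_left _ h)⟩,
      fun u hu => hadj u (Finset.mem_union_left _ hu),
      fun w hw => hnadj w (Finset.mem_union_left _ hw)⟩
  refine ⟨⟨z, hzS⟩, ?_, ?_, ?_, ?_⟩
  · intro h
    exact hzU (Finset.mem_union_right _ (Finset.mem_image.mpr ⟨⟨z, hzS⟩, h, rfl⟩))
  · intro h
    exact hzW (Finset.mem_union_right _ (Finset.mem_image.mpr ⟨⟨z, hzS⟩, h, rfl⟩))
  · rintro ⟨u, huS⟩ hu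
    exact hadj u (Finset.mem_union_right _ (Finset.mem_image.mpr ⟨⟨u, huS⟩, hu, rfl⟩))
  · rintro ⟨w, hwS⟩ hw
    exact hnadj w (Finset.mem_union_right _ (Finset.mem_image.mpr ⟨⟨w, hwS⟩, hw, rfl⟩))
end

section
/- Every countable simple graph G is isomorphic to an induced subgraph of any countable simple graph R with property (R); that is, there exists an injective map f : V(G) → V(R) such that u is adjacent to v in G if and only if f(u) is adjacent to f(v) in R. -/
open scoped Classical

noncomputable section EmbedAux

variable {V : Type*}

/-- Images of earlier vertices adjacent to `n`. -/
def Uset (G' : SimpleGraph ℕ) (n : ℕ) (prev : ℕ → V) : Finset V :=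
  ((Finset.range n).filter (fun k => G'.Adj n k)).image prev

/-- Images of earlier vertices not adjacent to `n`. -/
def Wset (G' : SimpleGraph ℕ) (n : ℕ) (prev : ℕ → V) : Finset V :=
  ((Finset.range n).filter (fun k => ¬ G'.Adj n k)).image prev

def step (R : SimpleGraph V) (G' : SimpleGraph ℕ) (n : ℕ) (prev : ℕ → V) (v0 : V) : V :=
  if h : ∃ z, z ∉ Uset G' n prev ∧ z ∉ Wset G' n prev ∧
      (∀ u ∈ Uset G' n prev, R.Adj z u) ∧ (∀ w ∈ Wset G' n prev, ¬ R.Adj z w) then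
    h.choose
  else v0

lemma step_spec (R : SimpleGraph V) (G' : SimpleGraph ℕ) (n : ℕ) (prev : ℕ → V) (v0 : V)
    (hR : R.HasPropR) (hdisj : Disjoint (Uset G' n prev) (Wset G' n prev)) :
    step R G' n prev v0 ∉ Uset G' n prev ∧ step R G' n prev v0 ∉ Wset G' n prev ∧
      (∀ u ∈ Uset G' n prev, R.Adj (step R G' n prev v0) u) ∧
      (∀ w ∈ Wset G' n prev, ¬ R.Adj (step R G' n prev v0) w) := by
  have hex := hR (Uset G' n prev) (Wset G' n prev) hdisj
  unfold step
  rw [dif_pos hex]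
  exact hex.choose_spec

lemma step_congr (R : SimpleGraph V) (G' : SimpleGraph ℕ) (n : ℕ) (p q : ℕ → V) (v0 : V)
    (h : ∀ m < n, p m = q m) : step R G' n p v0 = step R G' n q v0 := by
  have hU : Uset G' n p = Uset G' n q :=
    Finset.image_congr fun x hx =>
      h x (Finset.mem_range.mp (Finset.mem_filter.mp hx).1)
  have hW : Wset G' n p = Wset G' n q :=
    Finset.image_congr fun x hx =>
      h x (Finset.mem_range.mp (Finset.mem_filter.mp hx).1)
  unfold step
  rw [hU, hW]

def seq (R : SimpleGraph V) (G' : SimpleGraph ℕ) (v0 : V) : ℕ → V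
  | n => step R G' n (fun m => if h : m < n then seq R G' v0 m else v0) v0
termination_by n => n
decreasing_by exact h

lemma seq_eq_step (R : SimpleGraph V) (G' : SimpleGraph ℕ) (v0 : V) (n : ℕ) :
    seq R G' v0 n = step R G' n (seq R G' v0) v0 := by
  rw [seq]
  exact step_congr R G' n _ _ v0 fun m hm => dif_pos hm

lemma seq_key (R : SimpleGraph V) (hR : R.HasPropR) (G' : SimpleGraph ℕ) (v0 : V) :
    ∀ n m, m < n → seq R G' v0 m ≠ seq R G' v0 n ∧
      (R.Adj (seq R G' v0 n) (seq R G' v0 m) ↔ G'.Adj n m) := by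
  intro n
  induction n using Nat.strong_induction_on with
  | _ n ih =>
    set s := seq R G' v0 with hs
    have hinj : ∀ a b, a < n → b < n → s a = s b → a = b := by
      intro a b ha hb hab
      by_contra hne
      rcases lt_or_gt_of_ne hne with h | h
      · exact (ih b hb a h).1 hab
      · exact (ih a ha b h).1 hab.symm
    have hdisj : Disjoint (Uset G' n s) (Wset G' n s) := by
      rw [Finset.disjoint_left]
      rintro x hxU hxW
      obtain ⟨a, ha, rfl⟩ := Finset.mem_image.mp hxU
      obtain ⟨b, hb, hba⟩ := Finset.mem_image.mp hxW
      obtain ⟨ha1, ha2⟩ := Finset.mem_filter.mp ha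
      obtain ⟨hb1, hb2⟩ := Finset.mem_filter.mp hb
      have := hinj b a (Finset.mem_range.mp hb1) (Finset.mem_range.mp ha1) hba
      subst this
      exact hb2 ha2
    obtain ⟨hzU, hzW, hadj, hnadj⟩ := step_spec R G' n s v0 hR hdisj
    rw [← seq_eq_step, ← hs] at hzU hzW hadj hnadj
    intro m hm
    have hmem : ∀ {P : ℕ → Prop} [DecidablePred P], P m →
        s m ∈ ((Finset.range n).filter P).image s := by
      intro P _ hP
      exact Finset.mem_image_of_mem s (Finset.mem_filter.mpr ⟨Finset.mem_range.mpr hm, hP⟩)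
    constructor
    · by_cases hA : G'.Adj n m
      · intro he
        exact hzU (he ▸ hmem hA)
      · intro he
        exact hzW (he ▸ hmem hA)
    · constructor
      · intro hAdj
        by_contra hA
        exact hnadj _ (hmem hA) hAdj
      · intro hA
        exact hadj _ (hmem hA)

end EmbedAux

/-- Every countable simple graph embeds as an induced subgraph in any countable simple
graph with property (R). -/
theorem embeds_in_hasPropR {W V : Type*} [Countable W] [Countable V]
    (G : SimpleGraph W) (R : SimpleGraph V) (hR : R.HasPropR) :
    ∃ f : W → V, Function.Injective f ∧
      ∀ u v : W, G.Adj u v ↔ R.Adj (f u) (f v) := by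
  obtain ⟨z0, -, -, -, -⟩ := hR ∅ ∅ (Finset.disjoint_empty_left _)
  obtain ⟨e, he⟩ := Countable.exists_injective_nat W
  set emb : W ↪ ℕ := ⟨e, he⟩ with hemb
  set G' : SimpleGraph ℕ := G.map emb with hG'
  set s := seq R G' z0 with hs
  have key := seq_key R hR G' z0
  have sinj : ∀ a b : ℕ, s a = s b → a = b := by
    intro a b hab
    by_contra hne
    rcases lt_or_gt_of_ne hne with h | h
    · exact (key b a h).1 hab
    · exact (key a b h).1 hab.symm
  have sadj : ∀ a b : ℕ, a ≠ b → (R.Adj (s a) (s b) ↔ G'.Adj a b) := by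
    intro a b hne
    rcases lt_or_gt_of_ne hne with h | h
    · rw [R.adj_comm, G'.adj_comm]
      exact (key b a h).2
    · exact (key a b h).2
  refine ⟨fun u => s (e u), ?_, ?_⟩
  · intro u v huv
    exact he (sinj _ _ huv)
  · intro u v
    by_cases huv : u = v
    · subst huv
      simp [G.irrefl, R.irrefl]
    · have hne : e u ≠ e v := fun h => huv (he h)
      rw [sadj _ _ hne, hG']
      constructor
      · intro h
        exact SimpleGraph.map_adj_apply.mpr h
      · intro h
        exact (SimpleGraph.map_adj_apply).mp h
end

section
/- Let Σ be a finite group and let π₁, π₂ : Σ → Aut(R) be two free and non-singular actions of Σ on a countable simple graph R with property (R). Let φ be an isomorphism between finite induced subgraphs of R whose domain d(φ) is π₁(Σ)-invariant, whose range r(φ) is π₂(Σ)-invariant, and which satisfies φ(π₁(σ)x) = π₂(σ)φ(x) for all σ ∈ Σ and x ∈ d(φ). Then there exists an automorphism φ̄ of R with φ̄(x) = φ(x) for all x ∈ d(φ) and φ̄ ∘ π₁(σ) = π₂(σ) ∘ φ̄ for all σ ∈ Σ. -/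
namespace EqExt

variable {V : Type*} {S : Type*} [Group S] {R : SimpleGraph V} {π₁ π₂ : S →* (R ≃g R)}

lemma apply_mul (π : S →* (R ≃g R)) (σ τ : S) (x : V) : π (σ * τ) x = π σ (π τ x) := by
  simp [map_mul]

lemma apply_inv (π : S →* (R ≃g R)) (σ : S) (x : V) : π σ⁻¹ (π σ x) = x := by
  simp [map_inv]

lemma apply_one (π : S →* (R ≃g R)) (x : V) : π 1 x = x := by
  simp [map_one]

lemma adj_iff (π : S →* (R ≃g R)) (σ : S) (a b : V) :
    R.Adj (π σ a) (π σ b) ↔ R.Adj a b := (π σ).map_rel_iff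

lemma orbit_inj (π : S →* (R ≃g R)) (hfree : ∀ σ : S, ∀ x : V, π σ x = x → σ = 1)
    (v : V) : Function.Injective (fun σ : S => π σ v) := by
  intro σ τ h
  simp only at h
  have h1 : π (τ⁻¹ * σ) v = v := by rw [apply_mul, h, apply_inv]
  exact (inv_mul_eq_one.mp (hfree _ _ h1)).symm

lemma invFunOn_eq_of [Nonempty V] {f : V → V} {A : Set V} (hinj : Set.InjOn f A) {x y : V}
    (hx : x ∈ A) (hxy : f x = y) : Function.invFunOn f A y = x :=
  hinj (Function.invFunOn_mem ⟨x, hx, hxy⟩) hx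
    (by rw [Function.invFunOn_eq ⟨x, hx, hxy⟩, hxy])

structure PartIso (R : SimpleGraph V) (π₁ π₂ : S →* (R ≃g R)) where
  A : Finset V
  B : Finset V
  f : V → V
  bij : Set.BijOn f (↑A) (↑B)
  iso : ∀ u ∈ A, ∀ v ∈ A, R.Adj u v ↔ R.Adj (f u) (f v)
  invA : ∀ σ : S, ∀ x ∈ A, π₁ σ x ∈ A
  invB : ∀ σ : S, ∀ y ∈ B, π₂ σ y ∈ B
  equi : ∀ σ : S, ∀ x ∈ A, f (π₁ σ x) = π₂ σ (f x)

def PartIso.Ext (s t : PartIso R π₁ π₂) : Prop :=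
  s.A ⊆ t.A ∧ ∀ x ∈ s.A, t.f x = s.f x

lemma ext_refl (s : PartIso R π₁ π₂) : s.Ext s := ⟨subset_rfl, fun _ _ => rfl⟩

lemma PartIso.Ext.trans {s t u : PartIso R π₁ π₂} (h1 : s.Ext t) (h2 : t.Ext u) :
    s.Ext u :=
  ⟨h1.1.trans h2.1, fun x hx => (h2.2 x (h1.1 hx)).trans (h1.2 x hx)⟩

lemma PartIso.Ext.B_subset {s t : PartIso R π₁ π₂} (h : s.Ext t) : s.B ⊆ t.B := by
  intro y hy
  obtain ⟨x, hx, rfl⟩ := s.bij.surjOn (Finset.mem_coe.mpr hy)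
  have hx' : x ∈ s.A := by exact_mod_cast hx
  rw [← h.2 x hx']
  exact t.bij.mapsTo (Finset.mem_coe.mpr (h.1 hx'))

/-- The key one-step extension lemma. -/
lemma forward [Finite S] (hR : R.HasPropR)
    (hfree₁ : ∀ σ : S, ∀ x : V, π₁ σ x = x → σ = 1)
    (hfree₂ : ∀ σ : S, ∀ x : V, π₂ σ x = x → σ = 1)
    (hns₁ : ∀ (σ : S) (u : V), ¬ R.Adj (π₁ σ u) u)
    (hns₂ : ∀ (σ : S) (u : V), ¬ R.Adj (π₂ σ u) u)
    (s : PartIso R π₁ π₂) (v : V) :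
    ∃ t : PartIso R π₁ π₂, s.Ext t ∧ v ∈ t.A := by
  classical
  by_cases hv : v ∈ s.A
  · exact ⟨s, ext_refl s, hv⟩
  letI : Fintype S := Fintype.ofFinite S
  have horbA : ∀ σ : S, π₁ σ v ∉ s.A := by
    intro σ hσ
    exact hv (by simpa [apply_inv] using s.invA σ⁻¹ _ hσ)
  set U : Finset V := (s.A.filter (fun u => R.Adj v u)).image s.f with hU
  set W : Finset V := (s.A.filter (fun u => ¬ R.Adj v u)).image s.f with hW
  have hdisj : Disjoint U W := by
    rw [Finset.disjoint_left]
    rintro y hyU hyW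
    simp only [hU, hW, Finset.mem_image, Finset.mem_filter] at hyU hyW
    obtain ⟨a, ⟨haA, hadj⟩, rfl⟩ := hyU
    obtain ⟨b, ⟨hbA, hbadj⟩, hba⟩ := hyW
    have : b = a := s.bij.injOn (Finset.mem_coe.mpr hbA) (Finset.mem_coe.mpr haA) hba
    exact hbadj (this ▸ hadj)
  obtain ⟨z, hzU, hzW, hzadj, hznadj⟩ := hR U W hdisj
  have hz : ∀ u ∈ s.A, (R.Adj z (s.f u) ↔ R.Adj v u) := by
    intro u hu
    constructor
    · intro h
      by_contra hn
      exact hznadj _ (Finset.mem_image_of_mem _ (Finset.mem_filter.mpr ⟨hu, hn⟩)) h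
    · intro h
      exact hzadj _ (Finset.mem_image_of_mem _ (Finset.mem_filter.mpr ⟨hu, h⟩))
  have hzB : z ∉ s.B := by
    intro hy
    obtain ⟨x, hx, rfl⟩ := s.bij.surjOn (Finset.mem_coe.mpr hy)
    have hx' : x ∈ s.A := by exact_mod_cast hx
    by_cases h : R.Adj v x
    · exact hzU (Finset.mem_image_of_mem _ (Finset.mem_filter.mpr ⟨hx', h⟩))
    · exact hzW (Finset.mem_image_of_mem _ (Finset.mem_filter.mpr ⟨hx', h⟩))
  have horbB : ∀ σ : S, π₂ σ z ∉ s.B := by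
    intro σ hσ
    exact hzB (by simpa [apply_inv] using s.invB σ⁻¹ _ hσ)
  have hinj1 : Function.Injective (fun σ : S => π₁ σ v) := orbit_inj π₁ hfree₁ v
  have hinj2 : Function.Injective (fun σ : S => π₂ σ z) := orbit_inj π₂ hfree₂ z
  set O₁ : Finset V := Finset.univ.image (fun σ : S => π₁ σ v) with hO₁
  set O₂ : Finset V := Finset.univ.image (fun σ : S => π₂ σ z) with hO₂
  set f' : V → V := fun x =>
    if hx : ∃ σ : S, π₁ σ v = x then π₂ (Classical.choose hx) z else s.f x with hf'
  have hf'orbit : ∀ σ : S, f' (π₁ σ v) = π₂ σ z := by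
    intro σ
    have hx : ∃ τ : S, π₁ τ v = π₁ σ v := ⟨σ, rfl⟩
    have hc : Classical.choose hx = σ := hinj1 (Classical.choose_spec hx)
    simp only [hf', dif_pos hx, hc]
  have hf'A : ∀ x ∈ s.A, f' x = s.f x := by
    intro x hx
    have : ¬ ∃ σ : S, π₁ σ v = x := by
      rintro ⟨σ, rfl⟩; exact horbA σ hx
    simp only [hf', dif_neg this]
  have hmemA' : ∀ x, x ∈ s.A ∪ O₁ → x ∈ s.A ∨ ∃ σ : S, π₁ σ v = x := by
    intro x hx
    rcases Finset.mem_union.mp hx with h | h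
    · exact Or.inl h
    · right
      obtain ⟨σ, -, rfl⟩ := Finset.mem_image.mp h
      exact ⟨σ, rfl⟩
  have hadjmix : ∀ (σ : S), ∀ u ∈ s.A, (R.Adj (π₁ σ v) u ↔ R.Adj (π₂ σ z) (s.f u)) := by
    intro σ u hu
    have h1 : R.Adj (π₁ σ v) u ↔ R.Adj v (π₁ σ⁻¹ u) := by
      rw [← adj_iff π₁ σ⁻¹, apply_inv]
    have h2 : R.Adj (π₂ σ z) (s.f u) ↔ R.Adj z (π₂ σ⁻¹ (s.f u)) := by
      rw [← adj_iff π₂ σ⁻¹, apply_inv]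
    rw [h1, h2, ← s.equi σ⁻¹ u hu, ← hz _ (s.invA σ⁻¹ u hu)]
  have hadjorb : ∀ σ τ : S, ¬ R.Adj (π₁ σ v) (π₁ τ v) := by
    intro σ τ h
    have : R.Adj (π₁ (τ⁻¹ * σ) v) v := by
      rw [apply_mul]
      rw [← adj_iff π₁ τ⁻¹, apply_inv] at h
      exact h
    exact hns₁ _ _ this
  have hadjorb2 : ∀ σ τ : S, ¬ R.Adj (π₂ σ z) (π₂ τ z) := by
    intro σ τ h
    have : R.Adj (π₂ (τ⁻¹ * σ) z) z := by
      rw [apply_mul]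
      rw [← adj_iff π₂ τ⁻¹, apply_inv] at h
      exact h
    exact hns₂ _ _ this
  refine ⟨⟨s.A ∪ O₁, s.B ∪ O₂, f', ?_, ?_, ?_, ?_, ?_⟩, ⟨Finset.subset_union_left, hf'A⟩, ?_⟩
  · constructor
    · intro x hx
      rcases hmemA' x (by exact_mod_cast hx) with h | ⟨σ, rfl⟩
      · rw [hf'A x h]
        exact Finset.mem_coe.mpr (Finset.mem_union_left _ (s.bij.mapsTo (Finset.mem_coe.mpr h)))
      · rw [hf'orbit σ]
        exact Finset.mem_coe.mpr (Finset.mem_union_right _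
          (Finset.mem_image.mpr ⟨σ, Finset.mem_univ σ, rfl⟩))
    constructor
    · intro a ha b hb hab
      rcases hmemA' a (by exact_mod_cast ha) with h1 | ⟨σ, rfl⟩ <;>
        rcases hmemA' b (by exact_mod_cast hb) with h2 | ⟨τ, rfl⟩
      · exact s.bij.injOn (Finset.mem_coe.mpr h1) (Finset.mem_coe.mpr h2)
          (by rwa [hf'A a h1, hf'A b h2] at hab)
      · exfalso
        rw [hf'A a h1, hf'orbit τ] at hab
        exact horbB τ (hab ▸ s.bij.mapsTo (Finset.mem_coe.mpr h1))
      · exfalso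
        rw [hf'A b h2, hf'orbit σ] at hab
        exact horbB σ (hab ▸ s.bij.mapsTo (Finset.mem_coe.mpr h2))
      · rw [hf'orbit σ, hf'orbit τ] at hab
        rw [hinj2 hab]
    · intro y hy
      rcases Finset.mem_union.mp (by exact_mod_cast hy) with h | h
      · obtain ⟨x, hx, rfl⟩ := s.bij.surjOn (Finset.mem_coe.mpr h)
        have hx' : x ∈ s.A := by exact_mod_cast hx
        exact ⟨x, Finset.mem_coe.mpr (Finset.mem_union_left _ hx'), hf'A x hx'⟩
      · obtain ⟨σ, -, rfl⟩ := Finset.mem_image.mp h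
        exact ⟨π₁ σ v, Finset.mem_coe.mpr (Finset.mem_union_right _
          (Finset.mem_image.mpr ⟨σ, Finset.mem_univ σ, rfl⟩)), hf'orbit σ⟩
  · intro a ha b hb
    rcases hmemA' a ha with h1 | ⟨σ, rfl⟩ <;> rcases hmemA' b hb with h2 | ⟨τ, rfl⟩
    · rw [hf'A a h1, hf'A b h2]; exact s.iso a h1 b h2
    · rw [hf'A a h1, hf'orbit τ]
      rw [R.adj_comm, R.adj_comm (s.f a)]
      exact hadjmix τ a h1
    · rw [hf'A b h2, hf'orbit σ]
      exact hadjmix σ b h2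
    · rw [hf'orbit σ, hf'orbit τ]
      exact iff_of_false (hadjorb σ τ) (hadjorb2 σ τ)
  · intro τ x hx
    rcases hmemA' x hx with h | ⟨σ, rfl⟩
    · exact Finset.mem_union_left _ (s.invA τ x h)
    · refine Finset.mem_union_right _ (Finset.mem_image.mpr ⟨τ * σ, Finset.mem_univ _, ?_⟩)
      rw [apply_mul]
  · intro τ y hy
    rcases Finset.mem_union.mp hy with h | h
    · exact Finset.mem_union_left _ (s.invB τ y h)
    · obtain ⟨σ, -, rfl⟩ := Finset.mem_image.mp h
      refine Finset.mem_union_right _ (Finset.mem_image.mpr ⟨τ * σ, Finset.mem_univ _, ?_⟩)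
      rw [apply_mul]
  · intro τ x hx
    rcases hmemA' x hx with h | ⟨σ, rfl⟩
    · rw [hf'A _ (s.invA τ x h), hf'A x h]
      exact s.equi τ x h
    · rw [← apply_mul π₁, hf'orbit (τ * σ), hf'orbit σ, apply_mul]
  · refine Finset.mem_union_right _ (Finset.mem_image.mpr ⟨1, Finset.mem_univ _, ?_⟩)
    exact apply_one π₁ v

noncomputable def PartIso.symm [Nonempty V] (s : PartIso R π₁ π₂) : PartIso R π₂ π₁ where
  A := s.B
  B := s.A
  f := Function.invFunOn s.f ↑s.A
  bij := by
    refine ⟨?_, ?_, ?_⟩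
    · intro y hy
      obtain ⟨x, hx, rfl⟩ := s.bij.surjOn hy
      rw [invFunOn_eq_of s.bij.injOn hx rfl]
      exact hx
    · intro y hy y' hy' h
      obtain ⟨x, hx, rfl⟩ := s.bij.surjOn hy
      obtain ⟨x', hx', rfl⟩ := s.bij.surjOn hy'
      rw [invFunOn_eq_of s.bij.injOn hx rfl, invFunOn_eq_of s.bij.injOn hx' rfl] at h
      rw [h]
    · intro x hx
      exact ⟨s.f x, s.bij.mapsTo hx, invFunOn_eq_of s.bij.injOn hx rfl⟩
  iso := by
    intro y hy y' hy'
    obtain ⟨x, hx, rfl⟩ := s.bij.surjOn (Finset.mem_coe.mpr hy)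
    obtain ⟨x', hx', rfl⟩ := s.bij.surjOn (Finset.mem_coe.mpr hy')
    have hxA : x ∈ s.A := by exact_mod_cast hx
    have hxA' : x' ∈ s.A := by exact_mod_cast hx'
    rw [invFunOn_eq_of s.bij.injOn hx rfl, invFunOn_eq_of s.bij.injOn hx' rfl]
    exact (s.iso x hxA x' hxA').symm
  invA := s.invB
  invB := s.invA
  equi := by
    intro σ y hy
    obtain ⟨x, hx, rfl⟩ := s.bij.surjOn (Finset.mem_coe.mpr hy)
    have hxA : x ∈ s.A := by exact_mod_cast hx
    rw [invFunOn_eq_of s.bij.injOn hx rfl]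
    exact invFunOn_eq_of s.bij.injOn (Finset.mem_coe.mpr (s.invA σ x hxA))
      (s.equi σ x hxA)

lemma PartIso.symm_f_f [Nonempty V] (s : PartIso R π₁ π₂) {x : V} (hx : x ∈ s.A) :
    s.symm.f (s.f x) = x :=
  invFunOn_eq_of s.bij.injOn (Finset.mem_coe.mpr hx) rfl

lemma backward [Nonempty V] [Finite S] (hR : R.HasPropR)
    (hfree₁ : ∀ σ : S, ∀ x : V, π₁ σ x = x → σ = 1)
    (hfree₂ : ∀ σ : S, ∀ x : V, π₂ σ x = x → σ = 1)
    (hns₁ : ∀ (σ : S) (u : V), ¬ R.Adj (π₁ σ u) u)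
    (hns₂ : ∀ (σ : S) (u : V), ¬ R.Adj (π₂ σ u) u)
    (s : PartIso R π₁ π₂) (w : V) :
    ∃ t : PartIso R π₁ π₂, s.Ext t ∧ w ∈ t.B := by
  obtain ⟨t', ht', hw⟩ := forward hR hfree₂ hfree₁ hns₂ hns₁ s.symm w
  refine ⟨t'.symm, ⟨?_, ?_⟩, ?_⟩
  · -- s.A = s.symm.B ⊆ t'.B = t'.symm.A
    exact ht'.B_subset
  · intro x hx
    have hfx : s.f x ∈ t'.A := ht'.1 (s.bij.mapsTo (Finset.mem_coe.mpr hx))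
    have : t'.f (s.f x) = x := by
      rw [ht'.2 (s.f x) (s.bij.mapsTo (Finset.mem_coe.mpr hx))]
      exact s.symm_f_f hx
    exact invFunOn_eq_of t'.bij.injOn (Finset.mem_coe.mpr hfx) this
  · exact hw

end EqExt


open EqExt in
/-- Equivariant extension of partial isomorphisms: given two free and non-singular actions
`π₁, π₂` of a finite group `S` on a countable graph `R` with property (R), any
`S`-equivariant isomorphism between finite induced subgraphs with `π₁(S)`-invariant domain
and `π₂(S)`-invariant range extends to an `S`-equivariant automorphism of `R`. -/
theorem equivariant_extension {V : Type*} [Countable V]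
    (R : SimpleGraph V) (hR : R.HasPropR)
    (S : Type*) [Group S] [Finite S]
    (π₁ π₂ : S →* (R ≃g R))
    (hfree₁ : ∀ σ : S, ∀ x : V, π₁ σ x = x → σ = 1)
    (hfree₂ : ∀ σ : S, ∀ x : V, π₂ σ x = x → σ = 1)
    (hns₁ : ∀ (σ : S) (u : V), ¬ R.Adj (π₁ σ u) u)
    (hns₂ : ∀ (σ : S) (u : V), ¬ R.Adj (π₂ σ u) u)
    (A B : Finset V) (φ : V → V)
    (hbij : Set.BijOn φ (↑A : Set V) (↑B : Set V))
    (hiso : ∀ u ∈ A, ∀ v ∈ A, R.Adj u v ↔ R.Adj (φ u) (φ v))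
    (hinvA : ∀ (σ : S), ∀ x ∈ A, π₁ σ x ∈ A)
    (hinvB : ∀ (σ : S), ∀ y ∈ B, π₂ σ y ∈ B)
    (hequi : ∀ (σ : S), ∀ x ∈ A, φ (π₁ σ x) = π₂ σ (φ x)) :
    ∃ ψ : R ≃g R, (∀ x ∈ A, ψ x = φ x) ∧
      ∀ (σ : S) (x : V), ψ (π₁ σ x) = π₂ σ (ψ x) := by
  classical
  rcases isEmpty_or_nonempty V with hV | hV
  · exact ⟨RelIso.refl R.Adj, fun x _ => isEmptyElim x, fun σ x => isEmptyElim x⟩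
  obtain ⟨e, he⟩ := exists_surjective_nat V
  set s₀ : PartIso R π₁ π₂ := ⟨A, B, φ, hbij, hiso, hinvA, hinvB, hequi⟩ with hs₀
  have step : ∀ (s : PartIso R π₁ π₂) (n : ℕ),
      ∃ t : PartIso R π₁ π₂, s.Ext t ∧ e n ∈ t.A ∧ e n ∈ t.B := by
    intro s n
    obtain ⟨t1, ht1, hA1⟩ := forward hR hfree₁ hfree₂ hns₁ hns₂ s (e n)
    obtain ⟨t2, ht2, hB2⟩ := backward hR hfree₁ hfree₂ hns₁ hns₂ t1 (e n)
    exact ⟨t2, ht1.trans ht2, ht2.1 hA1, hB2⟩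
  set chain : ℕ → PartIso R π₁ π₂ :=
    fun n => Nat.rec s₀ (fun n s => (step s n).choose) n with hchain
  have chain_zero : chain 0 = s₀ := rfl
  have chain_ext : ∀ n : ℕ, (chain n).Ext (chain (n + 1)) :=
    fun n => (step (chain n) n).choose_spec.1
  have chain_A : ∀ n : ℕ, e n ∈ (chain (n + 1)).A :=
    fun n => (step (chain n) n).choose_spec.2.1
  have chain_B : ∀ n : ℕ, e n ∈ (chain (n + 1)).B :=
    fun n => (step (chain n) n).choose_spec.2.2
  have mono : ∀ m n : ℕ, m ≤ n → (chain m).Ext (chain n) := by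
    intro m n hmn
    induction n, hmn using Nat.le_induction with
    | base => exact ext_refl _
    | succ n hmn ih => exact ih.trans (chain_ext n)
  have coverA : ∀ x : V, ∃ n, x ∈ (chain n).A := by
    intro x
    obtain ⟨n, rfl⟩ := he x
    exact ⟨n + 1, chain_A n⟩
  have coverB : ∀ y : V, ∃ n, y ∈ (chain n).B := by
    intro y
    obtain ⟨n, rfl⟩ := he y
    exact ⟨n + 1, chain_B n⟩
  set ψ : V → V := fun x => (chain (coverA x).choose).f x with hψ
  have coh : ∀ (n : ℕ) (x : V), x ∈ (chain n).A → (chain n).f x = ψ x := by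
    intro n x hx
    set m := (coverA x).choose with hm
    have hxm : x ∈ (chain m).A := (coverA x).choose_spec
    have h1 := (mono n (max n m) (le_max_left n m)).2 x hx
    have h2 := (mono m (max n m) (le_max_right n m)).2 x hxm
    rw [hψ]
    simp only
    rw [← h1, ← h2]
  have hψmem : ∀ (n : ℕ) (x : V), x ∈ (chain n).A → ψ x ∈ (chain n).B := by
    intro n x hx
    rw [← coh n x hx]
    exact (chain n).bij.mapsTo (Finset.mem_coe.mpr hx)
  have hψbij : Function.Bijective ψ := by
    constructor
    · intro x y hxy
      obtain ⟨n, hn⟩ := coverA x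
      obtain ⟨m, hm⟩ := coverA y
      have hxk : x ∈ (chain (max n m)).A := (mono n _ (le_max_left n m)).1 hn
      have hyk : y ∈ (chain (max n m)).A := (mono m _ (le_max_right n m)).1 hm
      apply (chain (max n m)).bij.injOn (Finset.mem_coe.mpr hxk) (Finset.mem_coe.mpr hyk)
      rw [coh _ x hxk, coh _ y hyk]
      exact hxy
    · intro y
      obtain ⟨n, hn⟩ := coverB y
      obtain ⟨x, hx, hfx⟩ := (chain n).bij.surjOn (Finset.mem_coe.mpr hn)
      have hx' : x ∈ (chain n).A := by exact_mod_cast hx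
      exact ⟨x, by rw [← coh n x hx']; exact hfx⟩
  have hψadj : ∀ x y : V, R.Adj (ψ x) (ψ y) ↔ R.Adj x y := by
    intro x y
    obtain ⟨n, hn⟩ := coverA x
    obtain ⟨m, hm⟩ := coverA y
    have hxk : x ∈ (chain (max n m)).A := (mono n _ (le_max_left n m)).1 hn
    have hyk : y ∈ (chain (max n m)).A := (mono m _ (le_max_right n m)).1 hm
    rw [← coh _ x hxk, ← coh _ y hyk]
    exact ((chain (max n m)).iso x hxk y hyk).symm
  have hψequi : ∀ (σ : S) (x : V), ψ (π₁ σ x) = π₂ σ (ψ x) := by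
    intro σ x
    obtain ⟨n, hn⟩ := coverA x
    have h2 : π₁ σ x ∈ (chain n).A := (chain n).invA σ x hn
    rw [← coh n _ h2, ← coh n x hn]
    exact (chain n).equi σ x hn
  have hψinit : ∀ x ∈ A, ψ x = φ x := by
    intro x hx
    have hx0 : x ∈ (chain 0).A := hx
    rw [← coh 0 x hx0]
    rfl
  refine ⟨⟨Equiv.ofBijective ψ hψbij, ?_⟩, hψinit, hψequi⟩
  intro a b
  exact hψadj a b
end

section
/- Every homogeneous action of a group Γ by automorphisms on a countable simple graph R with property (R) disconnects the finite sets. -/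
/-- An action of `Γ` on a graph `G` is homogeneous if every isomorphism between finite
induced subgraphs is realised by a group element. -/
def IsHomogeneousAction {Γ : Type*} [Group Γ] {V : Type*} (G : SimpleGraph V)
    (ρ : Γ →* (G ≃g G)) : Prop :=
  ∀ (A : Finset V) (φ : V → V), Set.InjOn φ (↑A : Set V) →
    (∀ u ∈ A, ∀ v ∈ A, G.Adj u v ↔ G.Adj (φ u) (φ v)) →
    ∃ g : Γ, ∀ u ∈ A, ρ g u = φ u

/-- An action of `Γ` on a graph `G` disconnects the finite sets if every finite set of
vertices can be moved off itself with no edges between the set and its translate. -/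
def DisconnectsFinsets {Γ : Type*} [Group Γ] {V : Type*} (G : SimpleGraph V)
    (ρ : Γ →* (G ≃g G)) : Prop :=
  ∀ F : Finset V, ∃ g : Γ, (∀ u ∈ F, ρ g u ∉ F) ∧
    ∀ u ∈ F, ∀ v ∈ F, ¬ G.Adj (ρ g u) v

/-- Every homogeneous action on a countable graph with property (R) disconnects the
finite sets. -/
theorem homogeneous_disconnects {Γ : Type*} [Group Γ] {V : Type*} [Countable V]
    (R : SimpleGraph V) (hR : R.HasPropR) (ρ : Γ →* (R ≃g R))
    (hhom : IsHomogeneousAction R ρ) :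
    DisconnectsFinsets R ρ := by
  classical
  intro F
  have key : ∀ A : Finset V, A ⊆ F → ∃ φ : V → V,
      Set.InjOn φ (↑A : Set V) ∧ (∀ u ∈ A, φ u ∉ F) ∧
      (∀ u ∈ A, ∀ v ∈ A, R.Adj u v ↔ R.Adj (φ u) (φ v)) ∧
      (∀ u ∈ A, ∀ v ∈ F, ¬ R.Adj (φ u) v) := by
    intro A
    induction A using Finset.induction_on with
    | empty =>
      intro _
      exact ⟨id, by simp [Set.InjOn], by simp, by simp, by simp⟩
    | @insert a A ha ih =>
      intro hsub
      have hAF : A ⊆ F := fun x hx => hsub (Finset.mem_insert_of_mem hx)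
      have haF : a ∈ F := hsub (Finset.mem_insert_self a A)
      obtain ⟨φ, hinj, hnotF, hiff, hnadj⟩ := ih hAF
      set U : Finset V := (A.filter (fun v => R.Adj a v)).image φ with hU
      set W : Finset V := F ∪ (A.filter (fun v => ¬ R.Adj a v)).image φ with hW
      have hdisj : Disjoint U W := by
        rw [Finset.disjoint_left]
        intro x hxU hxW
        obtain ⟨u, hu, rfl⟩ := Finset.mem_image.mp hxU
        have huA := (Finset.mem_filter.mp hu).1
        have huAdj := (Finset.mem_filter.mp hu).2
        rcases Finset.mem_union.mp hxW with h | h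
        · exact hnotF u huA h
        · obtain ⟨v, hv, hvv⟩ := Finset.mem_image.mp h
          have hvA := (Finset.mem_filter.mp hv).1
          have hvAdj := (Finset.mem_filter.mp hv).2
          have : v = u := hinj (by exact_mod_cast hvA) (by exact_mod_cast huA) hvv
          exact hvAdj (this ▸ huAdj)
      obtain ⟨z, hzU, hzW, hzAdj, hzNadj⟩ := hR U W hdisj
      have hzF : z ∉ F := fun h => hzW (Finset.mem_union_left _ h)
      have hzimg : ∀ u ∈ A, φ u ≠ z := by
        intro u huA heq
        by_cases h : R.Adj a u
        · exact hzU (heq ▸ Finset.mem_image_of_mem φ (Finset.mem_filter.mpr ⟨huA, h⟩))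
        · exact hzW (heq ▸ Finset.mem_union_right _
            (Finset.mem_image_of_mem φ (Finset.mem_filter.mpr ⟨huA, h⟩)))
      refine ⟨Function.update φ a z, ?_, ?_, ?_, ?_⟩
      · intro u hu v hv heq
        simp only [Finset.coe_insert, Set.mem_insert_iff] at hu hv
        rcases hu with rfl | hu' <;> rcases hv with rfl | hv'
        · rfl
        · rw [Function.update_self, Function.update_of_ne (by rintro rfl; exact ha hv')] at heq
          exact absurd heq.symm (hzimg v (by exact_mod_cast hv'))
        · rw [Function.update_self, Function.update_of_ne (by rintro rfl; exact ha hu')] at heq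
          exact absurd heq (hzimg u (by exact_mod_cast hu'))
        · rw [Function.update_of_ne (by rintro rfl; exact ha hu'),
            Function.update_of_ne (by rintro rfl; exact ha hv')] at heq
          exact hinj hu' hv' heq
      · intro u hu
        rcases Finset.mem_insert.mp hu with rfl | hu'
        · rw [Function.update_self]; exact hzF
        · rw [Function.update_of_ne (by rintro rfl; exact ha hu')]; exact hnotF u hu'
      · intro u hu v hv
        rcases Finset.mem_insert.mp hu with rfl | hu' <;>
          rcases Finset.mem_insert.mp hv with rfl | hv'
        · simp
        · rw [Function.update_self, Function.update_of_ne (by rintro rfl; exact ha hv')]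
          constructor
          · intro h
            exact hzAdj _ (Finset.mem_image_of_mem φ (Finset.mem_filter.mpr ⟨hv', h⟩))
          · intro h
            by_contra hna
            exact hzNadj _ (Finset.mem_union_right _
              (Finset.mem_image_of_mem φ (Finset.mem_filter.mpr ⟨hv', hna⟩))) h
        · rw [Function.update_self, Function.update_of_ne (by rintro rfl; exact ha hu')]
          rw [R.adj_comm, R.adj_comm (φ u) z]
          constructor
          · intro h
            exact hzAdj _ (Finset.mem_image_of_mem φ (Finset.mem_filter.mpr ⟨hu', h⟩))
          · intro h
            by_contra hna
            exact hzNadj _ (Finset.mem_union_right _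
              (Finset.mem_image_of_mem φ (Finset.mem_filter.mpr ⟨hu', hna⟩))) h
        · rw [Function.update_of_ne (by rintro rfl; exact ha hu'),
            Function.update_of_ne (by rintro rfl; exact ha hv')]
          exact hiff u hu' v hv'
      · intro u hu v hv
        rcases Finset.mem_insert.mp hu with rfl | hu'
        · rw [Function.update_self]
          exact hzNadj v (Finset.mem_union_left _ hv)
        · rw [Function.update_of_ne (by rintro rfl; exact ha hu')]
          exact hnadj u hu' v hv
  obtain ⟨φ, hinj, hnotF, hiff, hnadj⟩ := key F le_rfl
  obtain ⟨g, hg⟩ := hhom F φ hinj hiff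
  refine ⟨g, fun u hu => ?_, fun u hu v hv => ?_⟩
  · rw [hg u hu]; exact hnotF u hu
  · rw [hg u hu]; exact hnadj u hu v hv
end

section
/- Let Γ act homogeneously by automorphisms on a countable simple graph R with property (R) and let N be a normal subgroup of Γ. Then either N acts trivially on R (every element of N fixes every vertex) or the restricted action of N on R is homogeneous. -/
private lemma exists_pat {V : Type*} (R : SimpleGraph V) (hR : R.HasPropR) (D : Finset V)
    (pat : V → Prop) : ∃ z, z ∉ D ∧ ∀ d ∈ D, R.Adj z d ↔ pat d := by
  classical
  obtain ⟨z, hzU, hzW, hadj, hnadj⟩ := hR (D.filter pat) (D.filter fun d => ¬ pat d)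
    (by simp only [Finset.disjoint_left, Finset.mem_filter]; tauto)
  refine ⟨z, fun hz => ?_, fun d hd => ?_⟩
  · by_cases h : pat z
    · exact hzU (Finset.mem_filter.2 ⟨hz, h⟩)
    · exact hzW (Finset.mem_filter.2 ⟨hz, h⟩)
  · by_cases h : pat d
    · exact iff_of_true (hadj d (Finset.mem_filter.2 ⟨hd, h⟩)) h
    · exact iff_of_false (hnadj d (Finset.mem_filter.2 ⟨hd, h⟩)) h

section Main

variable {Γ : Type*} [Group Γ] {V : Type*} {R : SimpleGraph V} {ρ : Γ →* (R ≃g R)}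
  {N : Subgroup Γ}

private lemma act_mul (g h : Γ) (x : V) : ρ (g * h) x = ρ g (ρ h x) := by
  rw [map_mul]; rfl

private lemma act_inv_apply (g : Γ) (x : V) : ρ g⁻¹ (ρ g x) = x := by
  rw [map_inv]; exact (ρ g).symm_apply_apply x

private lemma act_apply_inv (g : Γ) (x : V) : ρ g (ρ g⁻¹ x) = x := by
  rw [map_inv]; exact (ρ g).apply_symm_apply x

private lemma act_inv_eq {g : Γ} {x y : V} (h : ρ g x = y) : ρ g⁻¹ y = x := by
  rw [← h, act_inv_apply]

/-- Realize a two-point partial isomorphism. -/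
private lemma hhom_pair (hhom : IsHomogeneousAction R ρ) {a b a' b' : V}
    (hab : a ≠ b) (hab' : a' ≠ b') (hadj : R.Adj a b ↔ R.Adj a' b') :
    ∃ g : Γ, ρ g a = a' ∧ ρ g b = b' := by
  classical
  have hmem : ∀ u : V, u ∈ ({a, b} : Finset V) → u ≠ a → u = b := by
    intro u hu hua
    exact Finset.mem_singleton.1 ((Finset.mem_insert.1 hu).resolve_left hua)
  obtain ⟨g, hg⟩ := hhom {a, b} (fun t => if t = a then a' else b')
    (by
      intro u hu v hv huv
      dsimp only at huv
      by_cases hu' : u = a <;> by_cases hv' : v = a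
      · rw [hu', hv']
      · rw [if_pos hu', if_neg hv'] at huv
        exact absurd huv hab'
      · rw [if_pos hv', if_neg hu'] at huv
        exact absurd huv.symm hab'
      · rw [hmem u (Finset.mem_coe.1 hu) hu', hmem v (Finset.mem_coe.1 hv) hv'])
    (by
      intro u hu v hv
      by_cases hu' : u = a <;> by_cases hv' : v = a
      · rw [if_pos hu', if_pos hv', hu', hv']
        exact iff_of_false (R.irrefl) (R.irrefl)
      · rw [if_pos hu', if_neg hv', hu', hmem v hv hv']
        exact hadj
      · rw [if_pos hv', if_neg hu', hv', hmem u hu hu']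
        rw [R.adj_comm b a, R.adj_comm b' a']
        exact hadj
      · rw [if_neg hu', if_neg hv', hmem u hu hu', hmem v hv hv']
        exact iff_of_false (R.irrefl) (R.irrefl))
  refine ⟨g, ?_, ?_⟩
  · have := hg a (Finset.mem_insert_self _ _)
    simpa using this
  · have := hg b (by simp)
    simpa [Ne.symm hab] using this

/-- Realize a three-point partial isomorphism. -/
private lemma hhom_triple (hhom : IsHomogeneousAction R ρ) {a b c a' b' c' : V}
    (hab : a ≠ b) (hac : a ≠ c) (hbc : b ≠ c)
    (hab' : a' ≠ b') (hac' : a' ≠ c') (hbc' : b' ≠ c')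
    (hadj1 : R.Adj a b ↔ R.Adj a' b') (hadj2 : R.Adj a c ↔ R.Adj a' c')
    (hadj3 : R.Adj b c ↔ R.Adj b' c') :
    ∃ g : Γ, ρ g a = a' ∧ ρ g b = b' ∧ ρ g c = c' := by
  classical
  have hmem : ∀ u : V, u ∈ ({a, b, c} : Finset V) → u ≠ a → u ≠ b → u = c := by
    intro u hu hua hub
    exact Finset.mem_singleton.1
      ((Finset.mem_insert.1 ((Finset.mem_insert.1 hu).resolve_left hua)).resolve_left hub)
  obtain ⟨g, hg⟩ := hhom {a, b, c} (fun t => if t = a then a' else if t = b then b' else c')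
    (by
      intro u hu v hv huv
      dsimp only at huv
      by_cases hu1 : u = a <;> by_cases hv1 : v = a
      · rw [hu1, hv1]
      · rw [if_pos hu1, if_neg hv1] at huv
        by_cases hv2 : v = b
        · rw [if_pos hv2] at huv; exact absurd huv hab'
        · rw [if_neg hv2] at huv; exact absurd huv hac'
      · rw [if_pos hv1, if_neg hu1] at huv
        by_cases hu2 : u = b
        · rw [if_pos hu2] at huv; exact absurd huv.symm hab'
        · rw [if_neg hu2] at huv; exact absurd huv.symm hac'
      · rw [if_neg hu1, if_neg hv1] at huv
        by_cases hu2 : u = b <;> by_cases hv2 : v = b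
        · rw [hu2, hv2]
        · rw [if_pos hu2, if_neg hv2] at huv; exact absurd huv hbc'
        · rw [if_pos hv2, if_neg hu2] at huv; exact absurd huv.symm hbc'
        · rw [hmem u hu hu1 hu2, hmem v hv hv1 hv2])
    (by
      intro u hu v hv
      by_cases hu1 : u = a <;> by_cases hv1 : v = a
      · rw [if_pos hu1, if_pos hv1, hu1, hv1]
        exact iff_of_false (R.irrefl) (R.irrefl)
      · rw [if_pos hu1, if_neg hv1, hu1]
        by_cases hv2 : v = b
        · rw [if_pos hv2, hv2]; exact hadj1
        · rw [if_neg hv2, hmem v hv hv1 hv2]; exact hadj2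
      · rw [if_pos hv1, if_neg hu1, hv1]
        by_cases hu2 : u = b
        · rw [if_pos hu2, hu2, R.adj_comm b a, R.adj_comm b' a']; exact hadj1
        · rw [if_neg hu2, hmem u hu hu1 hu2, R.adj_comm c a, R.adj_comm c' a']; exact hadj2
      · rw [if_neg hu1, if_neg hv1]
        by_cases hu2 : u = b <;> by_cases hv2 : v = b
        · rw [if_pos hu2, if_pos hv2, hu2, hv2]
          exact iff_of_false (R.irrefl) (R.irrefl)
        · rw [if_pos hu2, if_neg hv2, hu2, hmem v hv hv1 hv2]; exact hadj3
        · rw [if_pos hv2, if_neg hu2, hv2, hmem u hu hu1 hu2,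
            R.adj_comm c b, R.adj_comm c' b']
          exact hadj3
        · rw [if_neg hu2, if_neg hv2, hmem u hu hu1 hu2, hmem v hv hv1 hv2]
          exact iff_of_false (R.irrefl) (R.irrefl))
  refine ⟨g, ?_, ?_, ?_⟩
  · have := hg a (by simp)
    simpa using this
  · have := hg b (by simp)
    simpa [Ne.symm hab] using this
  · have := hg c (by simp)
    simpa [Ne.symm hac, Ne.symm hbc] using this

/-- Realize the partial isomorphism which is the identity on `D` and moves `a` to `a'`. -/
private lemma hhom_fix_one (hhom : IsHomogeneousAction R ρ) (D : Finset V) {a a' : V}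
    (haD : a ∉ D) (ha'D : a' ∉ D) (haa' : a ≠ a')
    (hadj : ∀ d ∈ D, R.Adj a d ↔ R.Adj a' d) :
    ∃ g : Γ, (∀ d ∈ D, ρ g d = d) ∧ ρ g a = a' := by
  classical
  obtain ⟨g, hg⟩ := hhom (insert a D) (fun t => if t = a then a' else t)
    (by
      intro u hu v hv huv
      dsimp only at huv
      by_cases hu' : u = a <;> by_cases hv' : v = a
      · rw [hu', hv']
      · exfalso
        rw [if_pos hu', if_neg hv'] at huv
        have hvD : v ∈ D := (Finset.mem_insert.1 (Finset.mem_coe.1 hv)).resolve_left hv'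
        exact ha'D (huv ▸ hvD)
      · exfalso
        rw [if_pos hv', if_neg hu'] at huv
        have huD : u ∈ D := (Finset.mem_insert.1 (Finset.mem_coe.1 hu)).resolve_left hu'
        exact ha'D (huv ▸ huD)
      · rwa [if_neg hu', if_neg hv'] at huv)
    (by
      intro u hu v hv
      by_cases hu' : u = a <;> by_cases hv' : v = a
      · rw [if_pos hu', if_pos hv', hu', hv']
        exact iff_of_false (R.irrefl) (R.irrefl)
      · rw [if_pos hu', if_neg hv', hu']
        have hvD : v ∈ D := (Finset.mem_insert.1 hv).resolve_left hv'
        exact hadj v hvD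
      · rw [if_pos hv', if_neg hu', hv']
        have huD : u ∈ D := (Finset.mem_insert.1 hu).resolve_left hu'
        rw [R.adj_comm u a, R.adj_comm u a']
        exact hadj u huD
      · rw [if_neg hu', if_neg hv'])
  refine ⟨g, fun d hd => ?_, ?_⟩
  · have hda : d ≠ a := fun h => haD (h ▸ hd)
    have := hg d (Finset.mem_insert_of_mem hd)
    simpa [hda] using this
  · have := hg a (Finset.mem_insert_self _ _)
    simpa using this

/-- Realize the partial isomorphism which is the identity on `D` and moves `a ↦ a'`,
`b ↦ b'`. -/
private lemma hhom_fix_two (hhom : IsHomogeneousAction R ρ) (D : Finset V) {a b a' b' : V}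
    (haD : a ∉ D) (hbD : b ∉ D) (ha'D : a' ∉ D) (hb'D : b' ∉ D)
    (hab : a ≠ b) (hab' : a' ≠ b')
    (hadja : ∀ d ∈ D, R.Adj a d ↔ R.Adj a' d)
    (hadjb : ∀ d ∈ D, R.Adj b d ↔ R.Adj b' d)
    (hadj : R.Adj a b ↔ R.Adj a' b') :
    ∃ g : Γ, (∀ d ∈ D, ρ g d = d) ∧ ρ g a = a' ∧ ρ g b = b' := by
  classical
  obtain ⟨g, hg⟩ := hhom (insert a (insert b D))
    (fun t => if t = a then a' else if t = b then b' else t)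
    (by
      intro u hu v hv huv
      dsimp only at huv
      have hmem : ∀ w : V, w ∈ ↑(insert a (insert b D)) → w ≠ a → w ≠ b → w ∈ D := by
        intro w hw hwa hwb
        exact (Finset.mem_insert.1
          ((Finset.mem_insert.1 (Finset.mem_coe.1 hw)).resolve_left hwa)).resolve_left hwb
      by_cases hu1 : u = a <;> by_cases hv1 : v = a
      · rw [hu1, hv1]
      · rw [if_pos hu1, if_neg hv1] at huv
        by_cases hv2 : v = b
        · rw [if_pos hv2] at huv; exact absurd huv hab'
        · rw [if_neg hv2] at huv
          exact absurd (huv ▸ hmem v hv hv1 hv2) ha'D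
      · rw [if_pos hv1, if_neg hu1] at huv
        by_cases hu2 : u = b
        · rw [if_pos hu2] at huv; exact absurd huv.symm hab'
        · rw [if_neg hu2] at huv
          exact absurd (huv.symm ▸ hmem u hu hu1 hu2) ha'D
      · rw [if_neg hu1, if_neg hv1] at huv
        by_cases hu2 : u = b <;> by_cases hv2 : v = b
        · rw [hu2, hv2]
        · rw [if_pos hu2, if_neg hv2] at huv
          exact absurd (huv ▸ hmem v hv hv1 hv2) hb'D
        · rw [if_pos hv2, if_neg hu2] at huv
          exact absurd (huv.symm ▸ hmem u hu hu1 hu2) hb'D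
        · rwa [if_neg hu2, if_neg hv2] at huv)
    (by
      intro u hu v hv
      have hmem : ∀ w : V, w ∈ insert a (insert b D) → w ≠ a → w ≠ b → w ∈ D := by
        intro w hw hwa hwb
        exact (Finset.mem_insert.1
          ((Finset.mem_insert.1 hw).resolve_left hwa)).resolve_left hwb
      by_cases hu1 : u = a <;> by_cases hv1 : v = a
      · rw [if_pos hu1, if_pos hv1, hu1, hv1]
        exact iff_of_false (R.irrefl) (R.irrefl)
      · rw [if_pos hu1, if_neg hv1, hu1]
        by_cases hv2 : v = b
        · rw [if_pos hv2, hv2]; exact hadj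
        · rw [if_neg hv2]; exact hadja v (hmem v hv hv1 hv2)
      · rw [if_pos hv1, if_neg hu1, hv1]
        by_cases hu2 : u = b
        · rw [if_pos hu2, hu2, R.adj_comm b a, R.adj_comm b' a']; exact hadj
        · rw [if_neg hu2, R.adj_comm u a, R.adj_comm u a']
          exact hadja u (hmem u hu hu1 hu2)
      · rw [if_neg hu1, if_neg hv1]
        by_cases hu2 : u = b <;> by_cases hv2 : v = b
        · rw [if_pos hu2, if_pos hv2, hu2, hv2]
          exact iff_of_false (R.irrefl) (R.irrefl)
        · rw [if_pos hu2, if_neg hv2, hu2]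
          exact hadjb v (hmem v hv hv1 hv2)
        · rw [if_pos hv2, if_neg hu2, hv2, R.adj_comm u b, R.adj_comm u b']
          exact hadjb u (hmem u hu hu1 hu2)
        · rw [if_neg hu2, if_neg hv2])
  refine ⟨g, fun d hd => ?_, ?_, ?_⟩
  · have hda : d ≠ a := fun h => haD (h ▸ hd)
    have hdb : d ≠ b := fun h => hbD (h ▸ hd)
    have := hg d (Finset.mem_insert_of_mem (Finset.mem_insert_of_mem hd))
    simpa [hda, hdb] using this
  · have := hg a (Finset.mem_insert_self _ _)
    simpa using this
  · have := hg b (Finset.mem_insert_of_mem (Finset.mem_insert_self _ _))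
    simpa [Ne.symm hab] using this

private lemma lemA (hR : R.HasPropR) (hhom : IsHomogeneousAction R ρ) (hN : N.Normal)
    {n₀ : Γ} (hn₀ : n₀ ∈ N) {x₀ : V} (hx₀ : ρ n₀ x₀ ≠ x₀) (S : Finset V) (c : V) :
    ∃ m ∈ N, (∀ s ∈ S, ρ m s = s) ∧ ∃ v w : V, ρ m v = w ∧ v ≠ w ∧ ¬R.Adj v w ∧
      v ∉ S ∧ w ∉ S ∧ (∀ s ∈ S, R.Adj v s ↔ R.Adj c s) ∧
      (∀ s ∈ S, R.Adj w s ↔ R.Adj c s) := by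
  classical
  set y := ρ n₀ x₀ with hy
  have hyu : y ≠ x₀ := hx₀
  -- choose p with the type of c over S
  obtain ⟨p, hpS, hpadj⟩ := exists_pat R hR S (fun d => R.Adj c d)
  -- choose q with the type of c over S, and Adj q p ↔ Adj x₀ y
  obtain ⟨q, hqD, hqadj⟩ := exists_pat R hR (insert p S)
    (fun d => if d = p then R.Adj x₀ y else R.Adj c d)
  have hqp : q ≠ p := fun h => hqD (h ▸ Finset.mem_insert_self p S)
  have hqS : q ∉ S := fun h => hqD (Finset.mem_insert_of_mem h)
  have hqadjp : R.Adj q p ↔ R.Adj x₀ y := by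
    simpa using hqadj p (Finset.mem_insert_self p S)
  have hqadjS : ∀ s ∈ S, R.Adj q s ↔ R.Adj c s := by
    intro s hs
    have hsp : s ≠ p := fun h => hpS (h ▸ hs)
    simpa [hsp] using hqadj s (Finset.mem_insert_of_mem hs)
  -- a conjugate n₂ of n₀ with ρ n₂ p = q and ρ n₂ q ∉ S
  obtain ⟨n₂, hn₂N, hn₂p, hn₂q⟩ : ∃ n₂ ∈ N, ρ n₂ p = q ∧ ρ n₂ q ∉ S := by
    set w₃ := ρ n₀ y with hw₃
    have hw₃y : w₃ ≠ y := by
      intro h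
      have h2 : ρ n₀ y = ρ n₀ x₀ := by rw [← hw₃, h, hy]
      exact hyu ((ρ n₀).injective h2)
    by_cases hcase : w₃ = x₀
    · -- n₀ swaps x₀ and y
      obtain ⟨g, hgx, hgy⟩ := hhom_pair hhom (Ne.symm hyu) (Ne.symm hqp)
        (show R.Adj x₀ y ↔ R.Adj p q by rw [R.adj_comm p q]; exact hqadjp.symm)
      refine ⟨g * n₀ * g⁻¹, hN.conj_mem _ hn₀ g, ?_, ?_⟩
      · rw [act_mul, act_mul, act_inv_eq hgx, ← hy, hgy]
      · have hval : ρ (g * n₀ * g⁻¹) q = p := by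
          rw [act_mul, act_mul, act_inv_eq hgy, ← hw₃, hcase, hgx]
        rw [hval]; exact hpS
    · -- x₀, y, w₃ pairwise distinct
      obtain ⟨q₃, hq₃D, hq₃adj⟩ := exists_pat R hR (insert p (insert q S))
        (fun d => if d = p then R.Adj w₃ x₀ else if d = q then R.Adj w₃ y else False)
      have hq₃P : R.Adj q₃ p ↔ R.Adj w₃ x₀ := by
        simpa using hq₃adj p (Finset.mem_insert_self _ _)
      have hq₃Q : R.Adj q₃ q ↔ R.Adj w₃ y := by
        have := hq₃adj q (Finset.mem_insert_of_mem (Finset.mem_insert_self _ _))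
        simpa [hqp] using this
      have hq₃S : q₃ ∉ S := fun h =>
        hq₃D (Finset.mem_insert_of_mem (Finset.mem_insert_of_mem h))
      have hq₃nep : q₃ ≠ p := fun h => hq₃D (by rw [h]; exact Finset.mem_insert_self _ _)
      have hq₃neq : q₃ ≠ q := fun h =>
        hq₃D (by rw [h]; exact Finset.mem_insert_of_mem (Finset.mem_insert_self _ _))
      obtain ⟨g, hgx, hgy, hgw⟩ := hhom_triple hhom (Ne.symm hyu) (Ne.symm hcase)
        (Ne.symm hw₃y) (Ne.symm hqp) (Ne.symm hq₃nep) (Ne.symm hq₃neq)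
        (show R.Adj x₀ y ↔ R.Adj p q by rw [R.adj_comm p q]; exact hqadjp.symm)
        (show R.Adj x₀ w₃ ↔ R.Adj p q₃ by
          rw [R.adj_comm x₀ w₃, R.adj_comm p q₃]; exact hq₃P.symm)
        (show R.Adj y w₃ ↔ R.Adj q q₃ by
          rw [R.adj_comm y w₃, R.adj_comm q q₃]; exact hq₃Q.symm)
      refine ⟨g * n₀ * g⁻¹, hN.conj_mem _ hn₀ g, ?_, ?_⟩
      · rw [act_mul, act_mul, act_inv_eq hgx, ← hy, hgy]
      · have hval : ρ (g * n₀ * g⁻¹) q = q₃ := by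
          rw [act_mul, act_mul, act_inv_eq hgy, ← hw₃, hgw]
        rw [hval]; exact hq₃S
  -- the finite set that must be frozen
  set D₀ : Finset V := S ∪ S.image (fun s => ρ n₂⁻¹ s) with hD₀
  have hSD₀ : S ⊆ D₀ := Finset.subset_union_left
  have hpD₀ : p ∉ D₀ := by
    intro hmem
    rcases Finset.mem_union.1 hmem with hmem | hmem
    · exact hpS hmem
    · obtain ⟨s, hs, hps⟩ := Finset.mem_image.1 hmem
      have hsq : s = q := by rw [← hn₂p, ← hps, act_apply_inv]
      exact hqS (hsq ▸ hs)
  have hqD₀ : q ∉ D₀ := by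
    intro hmem
    rcases Finset.mem_union.1 hmem with hmem | hmem
    · exact hqS hmem
    · obtain ⟨s, hs, hqs⟩ := Finset.mem_image.1 hmem
      have hsq : s = ρ n₂ q := by rw [← hqs, act_apply_inv]
      exact hn₂q (hsq ▸ hs)
  have hqpD₀ : q ∉ insert p D₀ := by
    intro hmem
    rcases Finset.mem_insert.1 hmem with h1 | h1
    · exact hqp h1
    · exact hqD₀ h1
  -- choose v matching q over insert p D₀, not adjacent to q
  obtain ⟨v, hvD, hvadj⟩ := exists_pat R hR (insert q (insert p D₀))
    (fun d => if d = q then False else R.Adj q d)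
  have hvq : ¬R.Adj v q := by simpa using hvadj q (Finset.mem_insert_self _ _)
  have hvne : v ≠ q := fun h => hvD (h ▸ Finset.mem_insert_self _ _)
  have hvnotin : v ∉ insert p D₀ := fun h => hvD (Finset.mem_insert_of_mem h)
  have hvmatch : ∀ d ∈ insert p D₀, R.Adj v d ↔ R.Adj q d := by
    intro d hd
    have hdq : d ≠ q := fun h => hqpD₀ (h ▸ hd)
    simpa [hdq] using hvadj d (Finset.mem_insert_of_mem hd)
  -- the homogeneous element fixing insert p D₀ and sending q to v
  obtain ⟨h, hhfix, hhq⟩ := hhom_fix_one hhom (insert p D₀) hqpD₀ hvnotin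
    (Ne.symm hvne) (fun d hd => (hvmatch d hd).symm)
  -- the commutator
  refine ⟨n₂ * h * n₂⁻¹ * h⁻¹, ?_, ?_, v, q, ?_, hvne, hvq, ?_, hqS, ?_, hqadjS⟩
  · have heq : n₂ * h * n₂⁻¹ * h⁻¹ = n₂ * (h * n₂⁻¹ * h⁻¹) := by group
    rw [heq]
    exact mul_mem hn₂N (hN.conj_mem _ (inv_mem hn₂N) h)
  · intro s hs
    have h1 : ρ h⁻¹ s = s := act_inv_eq (hhfix s (Finset.mem_insert_of_mem (hSD₀ hs)))
    have h2 : ρ n₂⁻¹ s ∈ D₀ := Finset.mem_union_right _ (Finset.mem_image.2 ⟨s, hs, rfl⟩)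
    have h3 : ρ h (ρ n₂⁻¹ s) = ρ n₂⁻¹ s := hhfix _ (Finset.mem_insert_of_mem h2)
    rw [act_mul, act_mul, act_mul, h1, h3, act_apply_inv]
  · have h1 : ρ h⁻¹ v = q := act_inv_eq hhq
    have h2 : ρ n₂⁻¹ q = p := act_inv_eq hn₂p
    have h3 : ρ h p = p := hhfix p (Finset.mem_insert_self _ _)
    rw [act_mul, act_mul, act_mul, h1, h2, h3, hn₂p]
  · exact fun hmem => hvnotin (Finset.mem_insert_of_mem (hSD₀ hmem))
  · intro s hs
    exact (hvmatch s (Finset.mem_insert_of_mem (hSD₀ hs))).trans (hqadjS s hs)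

private lemma lemB (hR : R.HasPropR) (hhom : IsHomogeneousAction R ρ) (hN : N.Normal)
    {n₀ : Γ} (hn₀ : n₀ ∈ N) {x₀ : V} (hx₀ : ρ n₀ x₀ ≠ x₀) (S : Finset V) (c b : V)
    (hc : c ∉ S) (hb : b ∉ S) (hne : c ≠ b) (htyp : ∀ s ∈ S, R.Adj c s ↔ R.Adj b s) :
    ∃ m ∈ N, (∀ s ∈ S, ρ m s = s) ∧ ρ m c = b := by
  classical
  have LB0 : ∀ c b : V, c ∉ S → b ∉ S → c ≠ b → ¬R.Adj c b →
      (∀ s ∈ S, R.Adj c s ↔ R.Adj b s) →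
      ∃ m ∈ N, (∀ s ∈ S, ρ m s = s) ∧ ρ m c = b := by
    intro c b hc hb hne hnadj htyp
    obtain ⟨m₀, hm₀N, hm₀S, v, w, hvw, hvne, hnadjvw, hvS, hwS, htv, htw⟩ :=
      lemA hR hhom hN hn₀ hx₀ S c
    obtain ⟨g, hgfix, hgv, hgw⟩ := hhom_fix_two hhom S hvS hwS hc hb hvne hne
      (fun s hs => htv s hs)
      (fun s hs => (htw s hs).trans (htyp s hs))
      (iff_of_false hnadjvw hnadj)
    refine ⟨g * m₀ * g⁻¹, hN.conj_mem _ hm₀N g, fun s hs => ?_, ?_⟩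
    · rw [act_mul, act_mul, act_inv_eq (hgfix s hs), hm₀S s hs, hgfix s hs]
    · rw [act_mul, act_mul, act_inv_eq hgv, hvw, hgw]
  by_cases hadj : R.Adj c b
  · obtain ⟨z, hzD, hzadj⟩ := exists_pat R hR (insert c (insert b S))
      (fun d => if d = c then False else if d = b then False else R.Adj c d)
    have hzc : ¬R.Adj z c := by simpa using hzadj c (Finset.mem_insert_self _ _)
    have hzb : ¬R.Adj z b := by
      have := hzadj b (Finset.mem_insert_of_mem (Finset.mem_insert_self _ _))
      simpa [Ne.symm hne] using this
    have hzS : z ∉ S := fun h =>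
      hzD (Finset.mem_insert_of_mem (Finset.mem_insert_of_mem h))
    have hznec : z ≠ c := fun h => hzD (by rw [h]; exact Finset.mem_insert_self _ _)
    have hzneb : z ≠ b := fun h =>
      hzD (by rw [h]; exact Finset.mem_insert_of_mem (Finset.mem_insert_self _ _))
    have hztyp : ∀ s ∈ S, R.Adj z s ↔ R.Adj c s := by
      intro s hs
      have hsc : s ≠ c := fun h => hc (h ▸ hs)
      have hsb : s ≠ b := fun h => hb (h ▸ hs)
      simpa [hsc, hsb] using
        hzadj s (Finset.mem_insert_of_mem (Finset.mem_insert_of_mem hs))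
    obtain ⟨m₁, hm₁N, hm₁S, hm₁⟩ := LB0 c z hc hzS (Ne.symm hznec)
      (fun h => hzc h.symm) (fun s hs => (hztyp s hs).symm)
    obtain ⟨m₂, hm₂N, hm₂S, hm₂⟩ := LB0 b z hb hzS (Ne.symm hzneb)
      (fun h => hzb h.symm) (fun s hs => (htyp s hs).symm.trans (hztyp s hs).symm)
    refine ⟨m₂⁻¹ * m₁, mul_mem (inv_mem hm₂N) hm₁N, fun s hs => ?_, ?_⟩
    · rw [act_mul, hm₁S s hs, act_inv_eq (hm₂S s hs)]
    · rw [act_mul, hm₁, act_inv_eq hm₂]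
  · exact LB0 c b hc hb hne hadj htyp

end Main

/-- If `Γ` acts homogeneously on a countable graph with property (R) and `N ⊴ Γ`, then
either `N` acts trivially, or the restricted action of `N` is homogeneous. -/
theorem normal_subgroup_homogeneous {Γ : Type*} [Group Γ] {V : Type*} [Countable V]
    (R : SimpleGraph V) (hR : R.HasPropR) (ρ : Γ →* (R ≃g R))
    (hhom : IsHomogeneousAction R ρ) (N : Subgroup Γ) (hN : N.Normal) :
    (∀ n ∈ N, ∀ x : V, ρ n x = x) ∨
      (∀ (A : Finset V) (φ : V → V), Set.InjOn φ (↑A : Set V) →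
        (∀ u ∈ A, ∀ v ∈ A, R.Adj u v ↔ R.Adj (φ u) (φ v)) →
        ∃ n ∈ N, ∀ u ∈ A, ρ n u = φ u) := by
  classical
  by_cases htriv : ∀ n ∈ N, ∀ x : V, ρ n x = x
  · exact Or.inl htriv
  · right
    push_neg at htriv
    obtain ⟨n₀, hn₀, x₀, hx₀⟩ := htriv
    intro A φ
    induction A using Finset.induction_on with
    | empty =>
      intro _ _
      exact ⟨1, one_mem N, fun u hu => absurd hu (Finset.notMem_empty u)⟩
    | @insert a A' haA' ih =>
      intro hinj hadj
      have hinj' : Set.InjOn φ ↑A' := hinj.mono (by simp [Set.subset_insert])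
      have hadj' : ∀ u ∈ A', ∀ v ∈ A', R.Adj u v ↔ R.Adj (φ u) (φ v) := fun u hu v hv =>
        hadj u (Finset.mem_insert_of_mem hu) v (Finset.mem_insert_of_mem hv)
      obtain ⟨n, hnN, hn⟩ := ih hinj' hadj'
      by_cases hcb : ρ n a = φ a
      · refine ⟨n, hnN, fun u hu => ?_⟩
        rcases Finset.mem_insert.1 hu with rfl | hu
        · exact hcb
        · exact hn u hu
      · set S := A'.image φ with hS
        have hc : ρ n a ∉ S := by
          intro hmem
          obtain ⟨a', ha', hφ⟩ := Finset.mem_image.1 hmem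
          have h1 : ρ n a' = ρ n a := by rw [hn a' ha', hφ]
          exact haA' ((ρ n).injective h1 ▸ ha')
        have hb : φ a ∉ S := by
          intro hmem
          obtain ⟨a', ha', hφ⟩ := Finset.mem_image.1 hmem
          have h1 : a' = a := hinj
            (Finset.mem_coe.2 (Finset.mem_insert_of_mem ha'))
            (Finset.mem_coe.2 (Finset.mem_insert_self _ _)) hφ
          exact haA' (h1 ▸ ha')
        have htyp : ∀ s ∈ S, R.Adj (ρ n a) s ↔ R.Adj (φ a) s := by
          intro s hs
          obtain ⟨a', ha', rfl⟩ := Finset.mem_image.1 hs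
          conv_lhs => rw [← hn a' ha']
          exact ((ρ n).map_adj_iff).trans
            (hadj a (Finset.mem_insert_self _ _) a' (Finset.mem_insert_of_mem ha'))
        obtain ⟨m, hmN, hmS, hmc⟩ :=
          lemB hR hhom hN hn₀ hx₀ S (ρ n a) (φ a) hc hb hcb htyp
        refine ⟨m * n, mul_mem hmN hnN, fun u hu => ?_⟩
        rcases Finset.mem_insert.1 hu with rfl | hu
        · rw [act_mul, hmc]
        · rw [act_mul, hn u hu]
          exact hmS (φ u) (Finset.mem_image.2 ⟨u, hu, rfl⟩)
end

section
/- If a countable group Γ admits a faithful homogeneous action by automorphisms on a countable simple graph with property (R), then Γ is icc and Γ is not solvable. -/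
lemma fresh_copy {V : Type*} (R : SimpleGraph V) (hR : R.HasPropR)
    (T : Finset V) (S : Finset V) (hST : S ⊆ T) :
    ∃ θ : V → V, Set.InjOn θ (↑S : Set V) ∧ (∀ x ∈ S, θ x ∉ T) ∧
      (∀ x ∈ S, ∀ y ∈ S, (R.Adj x y ↔ R.Adj (θ x) (θ y))) ∧
      (∀ x ∈ T, ∀ y ∈ S, ¬ R.Adj x (θ y)) := by
  classical
  induction S using Finset.induction_on with
  | empty => exact ⟨id, by simp [Set.InjOn], by simp, by simp, by simp⟩
  | @insert a S ha ih =>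
    have haT : a ∈ T := hST (Finset.mem_insert_self a S)
    have hS : S ⊆ T := fun x hx => hST (Finset.mem_insert_of_mem hx)
    obtain ⟨θ, hinj, hout, hiso, hcross⟩ := ih hS
    set U : Finset V := (S.filter (fun y => R.Adj a y)).image θ with hUdef
    set W : Finset V := ((S.filter (fun y => ¬ R.Adj a y)).image θ) ∪ T with hWdef
    have hdisj : Disjoint U W := by
      rw [Finset.disjoint_left]
      intro x hxU hxW
      obtain ⟨y, hy, rfl⟩ := Finset.mem_image.mp hxU
      have hyS : y ∈ S := (Finset.mem_filter.mp hy).1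
      have hyA : R.Adj a y := (Finset.mem_filter.mp hy).2
      rcases Finset.mem_union.mp hxW with h | h
      · obtain ⟨y', hy', heq⟩ := Finset.mem_image.mp h
        have hy'S : y' ∈ S := (Finset.mem_filter.mp hy').1
        have : y' = y := hinj (Finset.mem_coe.mpr hy'S) (Finset.mem_coe.mpr hyS) heq
        exact (Finset.mem_filter.mp hy').2 (this ▸ hyA)
      · exact hout y hyS h
    obtain ⟨z, hzU, hzW, hadjU, hnadjW⟩ := hR U W hdisj
    have hzT : z ∉ T := fun h => hzW (Finset.mem_union_right _ h)
    have hzθ : ∀ y ∈ S, θ y ≠ z := by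
      intro y hy heq
      by_cases hA : R.Adj a y
      · exact hzU (heq ▸ Finset.mem_image_of_mem θ (Finset.mem_filter.mpr ⟨hy, hA⟩))
      · exact hzW (Finset.mem_union_left _
          (heq ▸ Finset.mem_image_of_mem θ (Finset.mem_filter.mpr ⟨hy, hA⟩)))
    refine ⟨Function.update θ a z, ?_, ?_, ?_, ?_⟩
    · -- InjOn
      intro x hx y hy hxy
      simp only [Finset.coe_insert, Set.mem_insert_iff, Finset.mem_coe] at hx hy
      have hne : ∀ w ∈ S, w ≠ a := fun w hw h => ha (h ▸ hw)
      rcases hx with rfl | hx <;> rcases hy with rfl | hy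
      · rfl
      · rw [Function.update_self, Function.update_of_ne (hne y hy)] at hxy
        exact absurd hxy.symm (hzθ y hy)
      · rw [Function.update_self, Function.update_of_ne (hne x hx)] at hxy
        exact absurd hxy (hzθ x hx)
      · rw [Function.update_of_ne (hne x hx), Function.update_of_ne (hne y hy)] at hxy
        exact hinj (Finset.mem_coe.mpr hx) (Finset.mem_coe.mpr hy) hxy
    · -- out of T
      intro x hx
      rcases Finset.mem_insert.mp hx with hxe | hx
      · rw [hxe, Function.update_self]; exact hzT
      · rw [Function.update_of_ne (fun h : x = a => ha (h ▸ hx))]; exact hout x hx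
    · -- iso
      intro x hx y hy
      have hne : ∀ w ∈ S, w ≠ a := fun w hw h => ha (h ▸ hw)
      have key : ∀ y ∈ S, (R.Adj a y ↔ R.Adj z (θ y)) := by
        intro y hy
        constructor
        · intro h
          exact hadjU _ (Finset.mem_image_of_mem θ (Finset.mem_filter.mpr ⟨hy, h⟩))
        · intro h
          by_contra hA
          exact hnadjW _ (Finset.mem_union_left _
            (Finset.mem_image_of_mem θ (Finset.mem_filter.mpr ⟨hy, hA⟩))) h
      rcases Finset.mem_insert.mp hx with hxe | hx <;> rcases Finset.mem_insert.mp hy with hye | hy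
      · rw [hxe, hye]; simp [R.irrefl]
      · rw [hxe]
        rw [Function.update_self, Function.update_of_ne (hne y hy)]
        exact key y hy
      · rw [hye]
        rw [Function.update_self, Function.update_of_ne (hne x hx)]
        rw [R.adj_comm x a, R.adj_comm (θ x) z]
        exact key x hx
      · rw [Function.update_of_ne (hne x hx), Function.update_of_ne (hne y hy)]
        exact hiso x hx y hy
    · -- cross
      intro x hx y hy
      rcases Finset.mem_insert.mp hy with hye | hy
      · rw [hye]
        rw [Function.update_self, R.adj_comm]
        exact hnadjW x (Finset.mem_union_right _ hx)
      · rw [Function.update_of_ne (fun h : y = a => ha (h ▸ hy))]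
        exact hcross x hx y hy


open scoped commutatorElement in
lemma commutator_step {Γ : Type*} [Group Γ] {V : Type*} (R : SimpleGraph V)
    (hR : R.HasPropR) (ρ : Γ →* (R ≃g R)) (H : Subgroup Γ)
    (hH : ∀ (A : Finset V) (φ : V → V), Set.InjOn φ (↑A : Set V) →
      (∀ u ∈ A, ∀ v ∈ A, R.Adj u v ↔ R.Adj (φ u) (φ v)) →
      ∃ g ∈ H, ∀ u ∈ A, ρ g u = φ u) :
    ∀ (A : Finset V) (φ : V → V), Set.InjOn φ (↑A : Set V) →
      (∀ u ∈ A, ∀ v ∈ A, R.Adj u v ↔ R.Adj (φ u) (φ v)) →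
      ∃ g ∈ ⁅H, H⁆, ∀ u ∈ A, ρ g u = φ u := by
  classical
  obtain ⟨v0, -, -, -, -⟩ := hR ∅ ∅ (by simp)
  haveI : Nonempty V := ⟨v0⟩
  intro A φ hinjφ hadjφ
  set S : Finset V := A ∪ A.image φ with hSdef
  have hAS : A ⊆ S := Finset.subset_union_left
  have hφS : ∀ a ∈ A, φ a ∈ S := fun a ha =>
    Finset.mem_union_right _ (Finset.mem_image_of_mem φ ha)
  obtain ⟨θ, hinj, hout, hiso, hcross⟩ := fresh_copy R hR S S (Finset.Subset.refl S)
  set S' : Finset V := S.image θ with hS'def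
  have hS'S : ∀ y ∈ S', y ∉ S := by
    intro y hy
    obtain ⟨x, hx, rfl⟩ := Finset.mem_image.mp hy
    exact hout x hx
  -- the swap map σ on S ∪ S'
  set σ : V → V := fun x => if x ∈ S then θ x else Function.invFunOn θ (↑S) x with hσdef
  have hσS : ∀ x ∈ S, σ x = θ x := fun x hx => if_pos hx
  have hσS' : ∀ x ∈ S, σ (θ x) = x := by
    intro x hx
    have h1 : θ x ∉ S := hout x hx
    have h2 : σ (θ x) = Function.invFunOn θ (↑S) (θ x) := if_neg h1
    rw [h2]
    exact hinj.leftInvOn_invFunOn (Finset.mem_coe.mpr hx)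
  have injσ : Set.InjOn σ (↑(S ∪ S') : Set V) := by
    intro x hx y hy hxy
    simp only [Finset.coe_union, Set.mem_union, Finset.mem_coe] at hx hy
    rcases hx with hx | hx <;> rcases hy with hy | hy
    · rw [hσS x hx, hσS y hy] at hxy
      exact hinj (Finset.mem_coe.mpr hx) (Finset.mem_coe.mpr hy) hxy
    · obtain ⟨b, hb, rfl⟩ := Finset.mem_image.mp hy
      rw [hσS x hx, hσS' b hb] at hxy
      exact absurd (hxy ▸ hb) (hout x hx)
    · obtain ⟨b, hb, rfl⟩ := Finset.mem_image.mp hx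
      rw [hσS y hy, hσS' b hb] at hxy
      exact absurd (hxy ▸ hb : θ y ∈ S) (hout y hy)
    · obtain ⟨b, hb, rfl⟩ := Finset.mem_image.mp hx
      obtain ⟨c, hc, rfl⟩ := Finset.mem_image.mp hy
      rw [hσS' b hb, hσS' c hc] at hxy
      rw [hxy]
  have adjσ : ∀ x ∈ S ∪ S', ∀ y ∈ S ∪ S', R.Adj x y ↔ R.Adj (σ x) (σ y) := by
    intro x hx y hy
    rcases Finset.mem_union.mp hx with hx | hx <;> rcases Finset.mem_union.mp hy with hy | hy
    · rw [hσS x hx, hσS y hy]; exact hiso x hx y hy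
    · obtain ⟨b, hb, rfl⟩ := Finset.mem_image.mp hy
      rw [hσS x hx, hσS' b hb]
      constructor
      · intro h; exact absurd h (hcross x hx b hb)
      · intro h; exact absurd ((R.adj_comm _ _).mp h) (hcross b hb x hx)
    · obtain ⟨b, hb, rfl⟩ := Finset.mem_image.mp hx
      rw [hσS y hy, hσS' b hb]
      constructor
      · intro h; exact absurd ((R.adj_comm _ _).mp h) (hcross y hy b hb)
      · intro h; exact absurd h (hcross b hb y hy)
    · obtain ⟨b, hb, rfl⟩ := Finset.mem_image.mp hx
      obtain ⟨c, hc, rfl⟩ := Finset.mem_image.mp hy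
      rw [hσS' b hb, hσS' c hc]
      exact (hiso b hb c hc).symm
  obtain ⟨k, hkH, hk⟩ := hH (S ∪ S') σ injσ adjσ
  -- the map ψ : φ on A, identity on S'
  set ψ : V → V := fun x => if x ∈ A then φ x else x with hψdef
  have hψA : ∀ x ∈ A, ψ x = φ x := fun x hx => if_pos hx
  have hS'A : ∀ y ∈ S', y ∉ A := fun y hy h => hS'S y hy (hAS h)
  have hψS' : ∀ x ∈ S', ψ x = x := fun x hx => if_neg (hS'A x hx)
  have injψ : Set.InjOn ψ (↑(A ∪ S') : Set V) := by
    intro x hx y hy hxy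
    simp only [Finset.coe_union, Set.mem_union, Finset.mem_coe] at hx hy
    rcases hx with hx | hx <;> rcases hy with hy | hy
    · rw [hψA x hx, hψA y hy] at hxy
      exact hinjφ (Finset.mem_coe.mpr hx) (Finset.mem_coe.mpr hy) hxy
    · rw [hψA x hx, hψS' y hy] at hxy
      exact absurd (hxy ▸ hφS x hx) (hS'S y hy)
    · rw [hψA y hy, hψS' x hx] at hxy
      exact absurd (hxy ▸ hφS y hy : φ y ∈ S) (fun hc => hS'S x hx (hxy ▸ hc))
    · rw [hψS' x hx, hψS' y hy] at hxy; exact hxy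
  have adjψ : ∀ x ∈ A ∪ S', ∀ y ∈ A ∪ S', R.Adj x y ↔ R.Adj (ψ x) (ψ y) := by
    intro x hx y hy
    have crossAS' : ∀ u ∈ S, ∀ y' ∈ S', ¬ R.Adj u y' := by
      intro u hu y' hy'
      obtain ⟨b, hb, rfl⟩ := Finset.mem_image.mp hy'
      exact hcross u hu b hb
    rcases Finset.mem_union.mp hx with hx | hx <;> rcases Finset.mem_union.mp hy with hy | hy
    · rw [hψA x hx, hψA y hy]; exact hadjφ x hx y hy
    · rw [hψA x hx, hψS' y hy]
      constructor
      · intro hcon; exact absurd hcon (crossAS' x (hAS hx) y hy)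
      · intro hcon; exact absurd hcon (crossAS' (φ x) (hφS x hx) y hy)
    · rw [hψA y hy, hψS' x hx]
      constructor
      · intro hcon; exact absurd ((R.adj_comm _ _).mp hcon) (crossAS' y (hAS hy) x hx)
      · intro hcon; exact absurd ((R.adj_comm _ _).mp hcon) (crossAS' (φ y) (hφS y hy) x hx)
    · rw [hψS' x hx, hψS' y hy]
  obtain ⟨h, hhH, hh⟩ := hH (A ∪ S') ψ injψ adjψ
  -- now the commutator
  refine ⟨⁅k⁻¹, h⁻¹⁆, Subgroup.commutator_mem_commutator (inv_mem hkH) (inv_mem hhH), ?_⟩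
  intro a haA
  have e1 : ρ h a = φ a := by
    rw [hh a (Finset.mem_union_left _ haA), hψA a haA]
  have hφaS : φ a ∈ S := hφS a haA
  have e2 : ρ k (φ a) = θ (φ a) := by
    rw [hk (φ a) (Finset.mem_union_left _ hφaS), hσS _ hφaS]
  have hθφaS' : θ (φ a) ∈ S' := Finset.mem_image_of_mem θ hφaS
  have e3 : ρ h (θ (φ a)) = θ (φ a) := by
    rw [hh _ (Finset.mem_union_right _ hθφaS'), hψS' _ hθφaS']
  have e3' : (ρ h)⁻¹ (θ (φ a)) = θ (φ a) := by
    conv_lhs => rw [← e3]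
    simp
  have e4 : (ρ k)⁻¹ (θ (φ a)) = φ a := by
    rw [← e2]; simp
  have : ρ ⁅k⁻¹, h⁻¹⁆ = (ρ k)⁻¹ * (ρ h)⁻¹ * (ρ k) * (ρ h) := by
    rw [commutatorElement_def]
    simp [map_mul, map_inv]
  rw [this]
  show (ρ k)⁻¹ ((ρ h)⁻¹ ((ρ k) ((ρ h) a))) = φ a
  rw [e1, e2, e3', e4]

/-- A countable group admitting a faithful homogeneous action on a countable graph
with property (R) is icc and not solvable. -/
theorem icc_and_not_solvable {Γ : Type*} [Group Γ] [Countable Γ] {V : Type*} [Countable V]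
    (R : SimpleGraph V) (hR : R.HasPropR) (ρ : Γ →* (R ≃g R))
    (hfaith : Function.Injective ρ) (hhom : IsHomogeneousAction R ρ) :
    (∀ g : Γ, g ≠ 1 → {h : Γ | ∃ k : Γ, k * g * k⁻¹ = h}.Infinite) ∧
      ¬ IsSolvable Γ := by
  classical
  constructor
  · -- icc
    intro g hg
    by_contra hfin
    rw [Set.not_infinite] at hfin
    -- find a vertex moved by g
    have hρg : ρ g ≠ 1 := fun h => hg (hfaith (h.trans (map_one ρ).symm))
    have : ∃ v, ρ g v ≠ v := by
      by_contra hfx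
      push_neg at hfx
      exact hρg (by ext x; exact hfx x)
    obtain ⟨v, hv⟩ := this
    set S : Finset V := hfin.toFinset.image (fun c => ρ c v) with hSdef
    -- find fresh z'
    have hz' : ∃ z', z' ≠ v ∧ z' ∉ S ∧ (R.Adj v z' ↔ R.Adj v (ρ g v)) := by
      by_cases hA : R.Adj v (ρ g v)
      · obtain ⟨z', hz1, hz2, hz3, -⟩ := hR {v} (S.erase v)
          (Finset.disjoint_left.mpr (by
            intro x hx
            rw [Finset.mem_singleton] at hx
            subst hx
            exact fun hc => (Finset.mem_erase.mp hc).1 rfl))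
        have hzv : z' ≠ v := fun h => hz1 (by rw [h]; exact Finset.mem_singleton_self v)
        refine ⟨z', hzv, ?_, ?_⟩
        · intro hzS
          exact hz2 (Finset.mem_erase.mpr ⟨hzv, hzS⟩)
        · exact ⟨fun _ => hA, fun _ => (R.adj_comm z' v).mp (hz3 v (Finset.mem_singleton_self v))⟩
      · obtain ⟨z', -, hz2, -, hz4⟩ := hR ∅ (insert v S) (Finset.disjoint_left.mpr (by simp))
        have hzv : z' ≠ v := fun h => hz2 (by rw [h]; exact Finset.mem_insert_self v S)
        refine ⟨z', hzv, fun h => hz2 (Finset.mem_insert_of_mem h), ?_⟩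
        exact ⟨fun hc => absurd ((R.adj_comm v z').mp hc) (hz4 v (Finset.mem_insert_self v S)),
          fun hc => absurd hc hA⟩
    obtain ⟨z', hz'v, hz'S, hz'adj⟩ := hz'
    -- partial iso v ↦ v, (ρ g v) ↦ z'
    set φ : V → V := fun x => if x = v then v else z' with hφdef
    have hφv : φ v = v := if_pos rfl
    have hφw : φ (ρ g v) = z' := if_neg hv
    have hinjφ : Set.InjOn φ (↑({v, ρ g v} : Finset V) : Set V) := by
      intro x hx y hy hxy
      simp only [Finset.coe_insert, Set.mem_insert_iff, Finset.coe_singleton,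
        Set.mem_singleton_iff] at hx hy
      rcases hx with hx | hx <;> rcases hy with hy | hy
      · exact hx.trans hy.symm
      · rw [hx, hy, hφv, hφw] at hxy; exact absurd hxy.symm hz'v
      · rw [hx, hy, hφv, hφw] at hxy; exact absurd hxy hz'v
      · exact hx.trans hy.symm
    have hadjφ : ∀ x ∈ ({v, ρ g v} : Finset V), ∀ y ∈ ({v, ρ g v} : Finset V),
        R.Adj x y ↔ R.Adj (φ x) (φ y) := by
      intro x hx y hy
      have hmem : ∀ t, t ∈ ({v, ρ g v} : Finset V) → t = v ∨ t = ρ g v := by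
        intro t ht
        rcases Finset.mem_insert.mp ht with h | h
        · exact Or.inl h
        · exact Or.inr (Finset.mem_singleton.mp h)
      rcases hmem x hx with hx' | hx' <;> rcases hmem y hy with hy' | hy' <;> rw [hx', hy']
      · rw [hφv]
      · rw [hφv, hφw]; exact hz'adj.symm
      · rw [hφv, hφw]
        rw [R.adj_comm (ρ g v) v, R.adj_comm z' v]
        exact hz'adj.symm
      · rw [hφw]
        exact iff_of_false (R.irrefl) (R.irrefl)
    obtain ⟨k, hk⟩ := hhom {v, ρ g v} φ hinjφ hadjφ
    have hkv : ρ k v = v := (hk v (Finset.mem_insert_self _ _)).trans hφv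
    have hkw : ρ k (ρ g v) = z' :=
      (hk (ρ g v) (Finset.mem_insert_of_mem (Finset.mem_singleton_self _))).trans hφw
    have hc' : ρ (k * g * k⁻¹) v = z' := by
      rw [map_mul, map_mul, map_inv]
      show ρ k (ρ g ((ρ k)⁻¹ v)) = z'
      have h1 : (ρ k)⁻¹ v = v := by nth_rewrite 1 [← hkv]; simp
      rw [h1]
      exact hkw
    have hmemF : k * g * k⁻¹ ∈ hfin.toFinset := hfin.mem_toFinset.mpr ⟨k, rfl⟩
    have : ρ (k * g * k⁻¹) v ∈ S := Finset.mem_image_of_mem _ hmemF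
    rw [hc'] at this
    exact hz'S this
  · -- not solvable
    intro hsolv
    have key : ∀ n, ∀ (A : Finset V) (φ : V → V), Set.InjOn φ (↑A : Set V) →
        (∀ u ∈ A, ∀ v ∈ A, R.Adj u v ↔ R.Adj (φ u) (φ v)) →
        ∃ g ∈ derivedSeries Γ n, ∀ u ∈ A, ρ g u = φ u := by
      intro n
      induction n with
      | zero =>
        intro A φ h1 h2
        obtain ⟨g, hgact⟩ := hhom A φ h1 h2
        exact ⟨g, Subgroup.mem_top g, hgact⟩
      | succ n ih =>
        intro A φ h1 h2
        rw [derivedSeries_succ]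
        exact commutator_step R hR ρ _ ih A φ h1 h2
    obtain ⟨n, hn⟩ := (isSolvable_def Γ).mp hsolv
    obtain ⟨u, -, -, -, -⟩ := hR ∅ ∅ (by simp)
    obtain ⟨z, hz1, -, -, -⟩ := hR {u} ∅ (by simp)
    have hne : z ≠ u := fun h => hz1 (by rw [h]; exact Finset.mem_singleton_self u)
    set φ : V → V := fun x => if x = u then z else u with hφdef
    have hφu : φ u = z := if_pos rfl
    have hφz : φ z = u := if_neg hne
    have hinjφ : Set.InjOn φ (↑({u, z} : Finset V) : Set V) := by
      intro x hx y hy hxy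
      simp only [Finset.coe_insert, Set.mem_insert_iff, Finset.coe_singleton,
        Set.mem_singleton_iff] at hx hy
      rcases hx with hx | hx <;> rcases hy with hy | hy
      · exact hx.trans hy.symm
      · rw [hx, hy, hφu, hφz] at hxy; exact absurd hxy hne
      · rw [hx, hy, hφu, hφz] at hxy; exact absurd hxy.symm hne
      · exact hx.trans hy.symm
    have hadjφ : ∀ x ∈ ({u, z} : Finset V), ∀ y ∈ ({u, z} : Finset V),
        R.Adj x y ↔ R.Adj (φ x) (φ y) := by
      intro x hx y hy
      have hmem : ∀ t, t ∈ ({u, z} : Finset V) → t = u ∨ t = z := by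
        intro t ht
        rcases Finset.mem_insert.mp ht with h | h
        · exact Or.inl h
        · exact Or.inr (Finset.mem_singleton.mp h)
      rcases hmem x hx with hx' | hx' <;> rcases hmem y hy with hy' | hy' <;> rw [hx', hy']
      · rw [hφu]; exact iff_of_false (R.irrefl) (R.irrefl)
      · rw [hφu, hφz]; exact R.adj_comm u z
      · rw [hφu, hφz]; exact R.adj_comm z u
      · rw [hφz]; exact iff_of_false (R.irrefl) (R.irrefl)
    obtain ⟨g, hgmem, hgact⟩ := key n {u, z} φ hinjφ hadjφ
    rw [hn, Subgroup.mem_bot] at hgmem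
    subst hgmem
    have := hgact u (Finset.mem_insert_self _ _)
    rw [map_one, hφu] at this
    exact hne this.symm
end

section
/- Let Γ be an infinite countable group and let R be a countable simple graph with property (R). There exists an action of Γ by automorphisms on R that is non-singular, has property (F), and disconnects the finite sets. If moreover Γ is torsion-free, the action can be chosen to be in addition free. -/
/-- The action is non-singular: no vertex is adjacent to one of its translates. -/
def NonSingularAction {Γ : Type*} [Group Γ] {V : Type*} (G : SimpleGraph V)
    (ρ : Γ →* (G ≃g G)) : Prop :=
  ∀ (g : Γ) (u : V), ¬ G.Adj (ρ g u) u

/-- Property (F): for all finite `S ⊆ Γ \ {1}` and finite `F ⊆ V` there is a vertex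
outside `F`, not adjacent to any vertex of `F`, moved by every element of `S`. -/
def PropertyF {Γ : Type*} [Group Γ] {V : Type*} (G : SimpleGraph V)
    (ρ : Γ →* (G ≃g G)) : Prop :=
  ∀ (S : Finset Γ) (F : Finset V), (1 : Γ) ∉ S →
    ∃ x : V, x ∉ F ∧ (∀ u ∈ F, ¬ G.Adj x u) ∧ ∀ g ∈ S, ρ g x ≠ x

/-- The action is free. -/
def FreeAction {Γ : Type*} [Group Γ] {V : Type*} (G : SimpleGraph V)
    (ρ : Γ →* (G ≃g G)) : Prop :=
  ∀ (g : Γ) (x : V), ρ g x = x → g = 1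

attribute [local instance] Classical.propDecidable

section BackForth

variable {A B : Type*} (G : SimpleGraph A) (H : SimpleGraph B)

/-- A finite set of pairs forming a partial isomorphism. -/
def GoodSet (s : Finset (A × B)) : Prop :=
  ∀ p ∈ s, ∀ q ∈ s, (p.1 = q.1 ↔ p.2 = q.2) ∧ (G.Adj p.1 q.1 ↔ H.Adj p.2 q.2)

lemma goodSet_swap {s : Finset (A × B)} (hs : GoodSet G H s) :
    GoodSet H G (s.image Prod.swap) := by
  intro p hp q hq
  simp only [Finset.mem_image] at hp hq
  obtain ⟨p', hp', rfl⟩ := hp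
  obtain ⟨q', hq', rfl⟩ := hq
  obtain ⟨h1, h2⟩ := hs p' hp' q' hq'
  exact ⟨h1.symm, h2.symm⟩

lemma goodSet_ext_dom (hH : H.HasPropR) {s : Finset (A × B)} (hs : GoodSet G H s) (a : A) :
    ∃ t, GoodSet G H t ∧ s ⊆ t ∧ ∃ b, (a, b) ∈ t := by
  by_cases h : ∃ b, (a, b) ∈ s
  · exact ⟨s, hs, Finset.Subset.refl s, h⟩
  · push_neg at h
    set U : Finset B := (s.filter fun p => G.Adj a p.1).image Prod.snd with hU
    set W : Finset B := (s.filter fun p => ¬ G.Adj a p.1).image Prod.snd with hW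
    have hdisj : Disjoint U W := by
      rw [Finset.disjoint_left]
      rintro b hbU hbW
      simp only [hU, hW, Finset.mem_image, Finset.mem_filter] at hbU hbW
      obtain ⟨p, ⟨hp, hpa⟩, hpb⟩ := hbU
      obtain ⟨q, ⟨hq, hqa⟩, hqb⟩ := hbW
      have := (hs p hp q hq).1.mpr (hpb.trans hqb.symm)
      exact hqa (this ▸ hpa)
    obtain ⟨z, hzU, hzW, hzadj, hznadj⟩ := hH U W hdisj
    have key : ∀ q ∈ s, (a = q.1 ↔ z = q.2) ∧ (G.Adj a q.1 ↔ H.Adj z q.2) := by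
      intro q hq
      have haq : a ≠ q.1 := fun he => h q.2 (by rw [he]; exact hq)
      have hzq : z ≠ q.2 := by
        intro he
        by_cases hadj : G.Adj a q.1
        · exact hzU (he ▸ Finset.mem_image_of_mem Prod.snd
            (Finset.mem_filter.mpr ⟨hq, hadj⟩))
        · exact hzW (he ▸ Finset.mem_image_of_mem Prod.snd
            (Finset.mem_filter.mpr ⟨hq, hadj⟩))
      refine ⟨iff_of_false haq hzq, ?_⟩
      constructor
      · intro hadj
        exact hzadj q.2 (Finset.mem_image_of_mem Prod.snd (Finset.mem_filter.mpr ⟨hq, hadj⟩))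
      · intro hadj
        by_contra hnadj
        exact hznadj q.2 (Finset.mem_image_of_mem Prod.snd
          (Finset.mem_filter.mpr ⟨hq, hnadj⟩)) hadj
    refine ⟨insert (a, z) s, ?_, Finset.subset_insert _ s, z, Finset.mem_insert_self _ s⟩
    intro p hp q hq
    rcases Finset.mem_insert.mp hp with rfl | hp <;>
      rcases Finset.mem_insert.mp hq with rfl | hq
    · exact ⟨by simp, iff_of_false (G.irrefl) (H.irrefl)⟩
    · exact key q hq
    · obtain ⟨h1, h2⟩ := key p hp
      refine ⟨?_, by rw [G.adj_comm, H.adj_comm]; exact h2⟩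
      rw [eq_comm, @eq_comm _ p.2]
      exact h1
    · exact hs p hp q hq

lemma goodSet_ext_ran (hG : G.HasPropR) {s : Finset (A × B)} (hs : GoodSet G H s) (b : B) :
    ∃ t, GoodSet G H t ∧ s ⊆ t ∧ ∃ a, (a, b) ∈ t := by
  obtain ⟨t', ht', hst', c, hc⟩ := goodSet_ext_dom H G hG (goodSet_swap G H hs) b
  refine ⟨t'.image Prod.swap, goodSet_swap H G ht', ?_, c, ?_⟩
  · intro p hp
    have : p.swap ∈ t' := hst' (Finset.mem_image_of_mem Prod.swap hp)
    simpa using Finset.mem_image_of_mem Prod.swap this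
  · exact Finset.mem_image.mpr ⟨(b, c), hc, rfl⟩

lemma goodSet_ext_both (hG : G.HasPropR) (hH : H.HasPropR) {s : Finset (A × B)}
    (hs : GoodSet G H s) (a : A) (b : B) :
    ∃ t, GoodSet G H t ∧ s ⊆ t ∧ (∃ y, (a, y) ∈ t) ∧ (∃ x, (x, b) ∈ t) := by
  obtain ⟨t1, ht1, hst1, y, hy⟩ := goodSet_ext_dom G H hH hs a
  obtain ⟨t2, ht2, ht12, x, hx⟩ := goodSet_ext_ran G H hG ht1 b
  exact ⟨t2, ht2, hst1.trans ht12, ⟨y, ht12 hy⟩, x, hx⟩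

variable (hG : G.HasPropR) (hH : H.HasPropR) (eA : A ≃ ℕ) (eB : B ≃ ℕ)

noncomputable def bfChain : ℕ → {s : Finset (A × B) // GoodSet G H s}
  | 0 => ⟨∅, by intro p hp; simp at hp⟩
  | n + 1 =>
    ⟨(goodSet_ext_both G H hG hH (bfChain n).2 (eA.symm n) (eB.symm n)).choose,
     (goodSet_ext_both G H hG hH (bfChain n).2 (eA.symm n) (eB.symm n)).choose_spec.1⟩

lemma bfChain_succ (n : ℕ) :
    (bfChain G H hG hH eA eB (n + 1) : Finset (A × B)) =
      (goodSet_ext_both G H hG hH (bfChain G H hG hH eA eB n).2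
        (eA.symm n) (eB.symm n)).choose := rfl

lemma bfChain_subset_succ (n : ℕ) :
    ((bfChain G H hG hH eA eB n : Finset (A × B))) ⊆ bfChain G H hG hH eA eB (n + 1) :=
  (goodSet_ext_both G H hG hH (bfChain G H hG hH eA eB n).2
    (eA.symm n) (eB.symm n)).choose_spec.2.1

lemma bfChain_mono {m n : ℕ} (h : m ≤ n) :
    ((bfChain G H hG hH eA eB m : Finset (A × B))) ⊆ bfChain G H hG hH eA eB n := by
  induction n with
  | zero => rw [Nat.le_zero.mp h]
  | succ n ih =>
    rcases Nat.lt_or_ge m (n + 1) with h' | h'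
    · exact (ih (Nat.lt_succ_iff.mp h')).trans (bfChain_subset_succ G H hG hH eA eB n)
    · rw [Nat.le_antisymm h h']

lemma bfChain_dom (a : A) :
    ∃ b, (a, b) ∈ (bfChain G H hG hH eA eB (eA a + 1) : Finset (A × B)) := by
  have := (goodSet_ext_both G H hG hH (bfChain G H hG hH eA eB (eA a)).2
    (eA.symm (eA a)) (eB.symm (eA a))).choose_spec.2.2.1
  rw [bfChain_succ]
  simp only [Equiv.symm_apply_apply] at this ⊢
  exact this

lemma bfChain_ran (b : B) :
    ∃ a, (a, b) ∈ (bfChain G H hG hH eA eB (eB b + 1) : Finset (A × B)) := by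
  have := (goodSet_ext_both G H hG hH (bfChain G H hG hH eA eB (eB b)).2
    (eA.symm (eB b)) (eB.symm (eB b))).choose_spec.2.2.2
  rw [bfChain_succ]
  simp only [Equiv.symm_apply_apply] at this ⊢
  exact this

lemma bfChain_compat {p q : A × B} {m n : ℕ}
    (hp : p ∈ (bfChain G H hG hH eA eB m : Finset (A × B)))
    (hq : q ∈ (bfChain G H hG hH eA eB n : Finset (A × B))) :
    (p.1 = q.1 ↔ p.2 = q.2) ∧ (G.Adj p.1 q.1 ↔ H.Adj p.2 q.2) := by
  have hp' := bfChain_mono G H hG hH eA eB (Nat.le_max_left m n) hp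
  have hq' := bfChain_mono G H hG hH eA eB (Nat.le_max_right m n) hq
  exact (bfChain G H hG hH eA eB (max m n)).2 p hp' q hq'

noncomputable def bfFun (a : A) : B := (bfChain_dom G H hG hH eA eB a).choose

lemma bfFun_mem (a : A) :
    (a, bfFun G H hG hH eA eB a) ∈ (bfChain G H hG hH eA eB (eA a + 1) : Finset (A × B)) :=
  (bfChain_dom G H hG hH eA eB a).choose_spec

include hG hH eA eB in
lemma nonempty_iso_of_hasPropR : Nonempty (G ≃g H) := by
  set F := bfFun G H hG hH eA eB with hF
  have hmem : ∀ a, (a, F a) ∈ (bfChain G H hG hH eA eB (eA a + 1) : Finset (A × B)) :=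
    bfFun_mem G H hG hH eA eB
  have hinj : Function.Injective F := by
    intro a a' h
    exact (bfChain_compat G H hG hH eA eB (hmem a) (hmem a')).1.mpr h
  have hsurj : Function.Surjective F := by
    intro b
    obtain ⟨a, ha⟩ := bfChain_ran G H hG hH eA eB b
    exact ⟨a, (bfChain_compat G H hG hH eA eB (hmem a) ha).1.mp rfl⟩
  have hadj : ∀ a a', G.Adj a a' ↔ H.Adj (F a) (F a') := fun a a' =>
    (bfChain_compat G H hG hH eA eB (hmem a) (hmem a')).2
  exact ⟨⟨Equiv.ofBijective F ⟨hinj, hsurj⟩, fun {a a'} => (hadj a a').symm⟩⟩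

end BackForth


section Construction

variable (Γ : Type*) [Group Γ] [Countable Γ] [Infinite Γ]

/-- An enumeration of the finite subsets of `Γ × ℕ` hitting each one at arbitrarily
large indices. -/
noncomputable def enumFun : ℕ → Finset (Γ × ℕ) := fun n =>
  (exists_surjective_nat (Finset (Γ × ℕ))).choose (Nat.unpair n).1

lemma enumFun_spec (s : Finset (Γ × ℕ)) (N : ℕ) : ∃ n, N ≤ n ∧ enumFun Γ n = s := by
  obtain ⟨i, hi⟩ := (exists_surjective_nat (Finset (Γ × ℕ))).choose_spec s
  refine ⟨Nat.pair i N, Nat.right_le_pair i N, ?_⟩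
  simp only [enumFun, Nat.unpair_pair]
  exact hi

/-- The graph on `Γ × ℕ` built from the enumeration. -/
noncomputable def gGraph : SimpleGraph (Γ × ℕ) where
  Adj p q := (p.2 < q.2 ∧ (q.1⁻¹ * p.1, p.2) ∈ enumFun Γ q.2) ∨
    (q.2 < p.2 ∧ (p.1⁻¹ * q.1, q.2) ∈ enumFun Γ p.2)
  symm := by constructor; intro p q h; exact h.symm
  loopless := by constructor; rintro p (⟨h, -⟩ | ⟨h, -⟩) <;> exact lt_irrefl _ h

lemma gGraph_hasPropR : (gGraph Γ).HasPropR := by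
  intro U W hUW
  set M : ℕ := (U ∪ W).sup Prod.snd with hM
  have hle : ∀ p ∈ U ∪ W, p.2 ≤ M := fun p hp => Finset.le_sup hp
  obtain ⟨N, hN, heN⟩ := enumFun_spec Γ U (M + 1)
  refine ⟨((1 : Γ), N), ?_, ?_, ?_, ?_⟩
  · intro h
    have := hle _ (Finset.mem_union_left W h)
    simp only at this; omega
  · intro h
    have := hle _ (Finset.mem_union_right U h)
    simp only at this; omega
  · intro u hu
    have hu2 : u.2 ≤ M := hle u (Finset.mem_union_left W hu)
    refine Or.inr ⟨by omega, ?_⟩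
    simp only [inv_one, one_mul, heN]
    simpa using hu
  · rintro w hw (⟨h, -⟩ | ⟨-, h⟩)
    · have := hle w (Finset.mem_union_right U hw)
      simp only at h; omega
    · simp only [inv_one, one_mul, heN] at h
      rw [Prod.mk.eta] at h
      exact (Finset.disjoint_right.mp hUW hw) h

/-- The translation automorphism. -/
noncomputable def shiftIso (γ : Γ) : gGraph Γ ≃g gGraph Γ where
  toEquiv := Equiv.prodCongr (Equiv.mulLeft γ) (Equiv.refl ℕ)
  map_rel_iff' := by
    intro p q
    have key : ∀ a b : Γ, (γ * b)⁻¹ * (γ * a) = b⁻¹ * a := by intro a b; group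
    simp only [gGraph, Equiv.prodCongr_apply, Equiv.coe_mulLeft, Prod.map, Equiv.refl_apply,
      key]

lemma shiftIso_apply (γ : Γ) (p : Γ × ℕ) : shiftIso Γ γ p = (γ * p.1, p.2) := rfl

/-- The action of `Γ` on `gGraph Γ`. -/
noncomputable def rho : Γ →* (gGraph Γ ≃g gGraph Γ) :=
  MonoidHom.mk' (shiftIso Γ) (by
    intro γ₁ γ₂
    apply RelIso.ext
    intro p
    show ((γ₁ * γ₂) * p.1, p.2) = shiftIso Γ γ₁ (shiftIso Γ γ₂ p)
    simp [shiftIso_apply, mul_assoc])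

lemma rho_apply (γ : Γ) (p : Γ × ℕ) : rho Γ γ p = (γ * p.1, p.2) := rfl

lemma rho_free : FreeAction (gGraph Γ) (rho Γ) := by
  intro γ p hp
  rw [rho_apply] at hp
  have : γ * p.1 = p.1 := congrArg Prod.fst hp
  calc γ = γ * p.1 * p.1⁻¹ := by group
  _ = p.1 * p.1⁻¹ := by rw [this]
  _ = 1 := by group

lemma rho_nonSingular : NonSingularAction (gGraph Γ) (rho Γ) := by
  rintro γ u (⟨h, -⟩ | ⟨h, -⟩) <;> rw [rho_apply] at h <;> exact lt_irrefl _ h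

lemma rho_propF : PropertyF (gGraph Γ) (rho Γ) := by
  intro S F hS
  set M : ℕ := F.sup Prod.snd with hM
  obtain ⟨N, hN, heN⟩ := enumFun_spec Γ ∅ (M + 1)
  refine ⟨((1 : Γ), N), ?_, ?_, ?_⟩
  · intro h
    have := Finset.le_sup (f := Prod.snd) h
    simp only at this; omega
  · rintro u hu (⟨h, -⟩ | ⟨-, h⟩)
    · have := Finset.le_sup (f := Prod.snd) hu
      simp only at h; omega
    · rw [heN] at h
      simp at h
  · intro g hg h
    rw [rho_apply] at h
    have : g * 1 = 1 := congrArg Prod.fst h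
    rw [mul_one] at this
    exact hS (this ▸ hg)

lemma rho_disconnects : DisconnectsFinsets (gGraph Γ) (rho Γ) := by
  intro F
  set Bad : Finset Γ := (F ×ˢ F).biUnion (fun uv =>
    ({uv.2.1 * uv.1.1⁻¹} : Finset Γ) ∪
    (enumFun Γ uv.2.2).image (fun c => uv.2.1 * c.1 * uv.1.1⁻¹) ∪
    (enumFun Γ uv.1.2).image (fun c => uv.2.1 * c.1⁻¹ * uv.1.1⁻¹)) with hBad
  obtain ⟨γ, hγ⟩ := Infinite.exists_notMem_finset Bad
  refine ⟨γ, ?_, ?_⟩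
  · intro u hu hmem
    rw [rho_apply] at hmem
    apply hγ
    rw [hBad]
    apply Finset.mem_biUnion.mpr
    refine ⟨(u, (γ * u.1, u.2)), Finset.mem_product.mpr ⟨hu, hmem⟩, ?_⟩
    apply Finset.mem_union_left
    apply Finset.mem_union_left
    simp [mul_assoc]
  · intro u hu v hv hadj
    rw [rho_apply] at hadj
    apply hγ
    rw [hBad]
    apply Finset.mem_biUnion.mpr
    refine ⟨(u, v), Finset.mem_product.mpr ⟨hu, hv⟩, ?_⟩
    rcases hadj with ⟨-, h⟩ | ⟨-, h⟩
    · apply Finset.mem_union_left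
      apply Finset.mem_union_right
      refine Finset.mem_image.mpr ⟨_, h, ?_⟩
      simp only
      group
    · apply Finset.mem_union_right
      refine Finset.mem_image.mpr ⟨_, h, ?_⟩
      simp only
      group

end Construction

/-- Every infinite countable group acts on a countable graph with property (R) by a
non-singular action with property (F) which disconnects the finite sets; if the group is
torsion-free, the action can moreover be chosen free. -/
theorem exists_nice_action {Γ : Type*} [Group Γ] [Countable Γ] [Infinite Γ]
    {V : Type*} [Countable V] (R : SimpleGraph V) (hR : R.HasPropR) :
    (∃ ρ : Γ →* (R ≃g R),
      NonSingularAction R ρ ∧ PropertyF R ρ ∧ DisconnectsFinsets R ρ) ∧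
    ((∀ g : Γ, g ≠ 1 → ¬IsOfFinOrder g) →
      ∃ ρ : Γ →* (R ≃g R),
        NonSingularAction R ρ ∧ PropertyF R ρ ∧ DisconnectsFinsets R ρ ∧
          FreeAction R ρ) := by
  classical
  have hVinf : Infinite V := by
    rw [← not_finite_iff_infinite]
    intro hfin
    haveI := Fintype.ofFinite V
    obtain ⟨z, -, hz, -, -⟩ := hR ∅ Finset.univ (by simp)
    exact hz (Finset.mem_univ z)
  haveI := hVinf
  haveI : Encodable V := Encodable.ofCountable V
  haveI : Denumerable V := Denumerable.ofEncodableOfInfinite V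
  haveI : Encodable (Γ × ℕ) := Encodable.ofCountable _
  haveI : Denumerable (Γ × ℕ) := Denumerable.ofEncodableOfInfinite _
  obtain ⟨φ⟩ := nonempty_iso_of_hasPropR (gGraph Γ) R (gGraph_hasPropR Γ) hR
    (Denumerable.eqv (Γ × ℕ)) (Denumerable.eqv V)
  have happ : ∀ (γ : Γ) (x : V),
      ((φ.symm.trans (rho Γ γ)).trans φ) x = φ (rho Γ γ (φ.symm x)) := fun _ _ => rfl
  set ρ : Γ →* (R ≃g R) := MonoidHom.mk' (fun γ => (φ.symm.trans (rho Γ γ)).trans φ) (by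
    intro a b
    apply RelIso.ext
    intro x
    rw [RelIso.mul_apply, happ, happ, happ, RelIso.symm_apply_apply]
    congr 1
    rw [map_mul, RelIso.mul_apply]) with hρ
  have hρapp : ∀ (γ : Γ) (x : V), ρ γ x = φ (rho Γ γ (φ.symm x)) := fun _ _ => rfl
  have hNS : NonSingularAction R ρ := by
    intro γ u hadj
    rw [hρapp] at hadj
    nth_rewrite 2 [← RelIso.apply_symm_apply φ u] at hadj
    exact rho_nonSingular Γ γ (φ.symm u) (φ.map_adj_iff.mp hadj)
  have hPF : PropertyF R ρ := by
    intro S F hS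
    obtain ⟨x', hx1, hx2, hx3⟩ := rho_propF Γ S (F.image φ.symm) hS
    refine ⟨φ x', ?_, ?_, ?_⟩
    · intro h
      have := Finset.mem_image_of_mem φ.symm h
      rw [RelIso.symm_apply_apply] at this
      exact hx1 this
    · intro u hu hadj
      rw [← RelIso.apply_symm_apply φ u] at hadj
      exact hx2 (φ.symm u) (Finset.mem_image_of_mem _ hu) (φ.map_adj_iff.mp hadj)
    · intro g hg h
      rw [hρapp, RelIso.symm_apply_apply] at h
      exact hx3 g hg (φ.injective h)
  have hDF : DisconnectsFinsets R ρ := by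
    intro F
    obtain ⟨γ, hd1, hd2⟩ := rho_disconnects Γ (F.image φ.symm)
    refine ⟨γ, ?_, ?_⟩
    · intro u hu h
      rw [hρapp] at h
      have := Finset.mem_image_of_mem φ.symm h
      rw [RelIso.symm_apply_apply] at this
      exact hd1 (φ.symm u) (Finset.mem_image_of_mem _ hu) this
    · intro u hu v hv hadj
      rw [hρapp, ← RelIso.apply_symm_apply φ v] at hadj
      exact hd2 (φ.symm u) (Finset.mem_image_of_mem _ hu) (φ.symm v)
        (Finset.mem_image_of_mem _ hv) (φ.map_adj_iff.mp hadj)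
  have hFree : FreeAction R ρ := by
    intro γ x h
    rw [hρapp] at h
    nth_rewrite 2 [← RelIso.apply_symm_apply φ x] at h
    exact rho_free Γ γ (φ.symm x) (φ.injective h)
  exact ⟨⟨ρ, hNS, hPF, hDF⟩, fun _ => ⟨ρ, hNS, hPF, hDF, hFree⟩⟩
end

section
/- Let Σ be a finite subgroup of an infinite countable group Γ and let R be a countable simple graph with property (R). There exists a non-singular action of Γ by automorphisms on R with property (F) such that: the restricted action of Σ on R is free; for every infinite subgroup H ≤ Γ the restricted action of H on R disconnects the finite sets; and for every pair of subgroups Σ' ≤ H' ≤ Γ such that Σ' is a highly core-free subgroup of H', the subgroup Σ' is highly core-free with respect to the restricted action H'↷R. -/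
/-- A subgroup `S` of a group `G` is highly core-free if for every finite subset `F` of
`G` there exists `g` with `gF ∩ SF = ∅` and `Sgu ∩ Sgv = ∅` for all distinct `u, v ∈ F`. -/
def Subgroup.HighlyCoreFree {G : Type*} [Group G] (S : Subgroup G) : Prop :=
  ∀ F : Finset G, ∃ g : G,
    (∀ u ∈ F, ∀ v ∈ F, ∀ σ ∈ S, g * u ≠ σ * v) ∧
    (∀ u ∈ F, ∀ v ∈ F, u ≠ v → ∀ σ ∈ S, ∀ τ ∈ S, σ * (g * u) ≠ τ * (g * v))

/-- A subgroup `S ≤ H ≤ Γ` is highly core-free with respect to the action of `H` on a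
graph `G` obtained by restricting an action of `Γ`. -/
def HighlyCoreFreeWrt {Γ : Type*} [Group Γ] {V : Type*} (G : SimpleGraph V)
    (ρ : Γ →* (G ≃g G)) (S H : Subgroup Γ) : Prop :=
  ∀ F : Finset V, ∃ g ∈ H,
    (∀ u ∈ F, ∀ v ∈ F, ∀ σ ∈ S, ρ g u ≠ ρ σ v) ∧
    (∀ u ∈ F, ∀ v ∈ F, ¬ G.Adj (ρ g u) v) ∧
    (∀ u ∈ F, ∀ v ∈ F, u ≠ v → ∀ σ ∈ S, ∀ τ ∈ S, ρ σ (ρ g u) ≠ ρ τ (ρ g v)) ∧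
    (∀ u ∈ F, ∀ v ∈ F, ∀ σ ∈ S, σ ≠ 1 → ¬ G.Adj (ρ σ (ρ g u)) (ρ g v))

namespace ExistsNiceRelAction

section BackForth

variable {A B : Type*} (G₁ : SimpleGraph A) (G₂ : SimpleGraph B)

/-- A finite list of pairs forms a partial isomorphism. -/
def Ok (L : List (A × B)) : Prop :=
  ∀ p ∈ L, ∀ q ∈ L, (p.1 = q.1 ↔ p.2 = q.2) ∧ (G₁.Adj p.1 q.1 ↔ G₂.Adj p.2 q.2)

lemma ok_swap {L : List (A × B)} (h : Ok G₁ G₂ L) : Ok G₂ G₁ (L.map Prod.swap) := by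
  intro p hp q hq
  simp only [List.mem_map] at hp hq
  obtain ⟨p', hp', rfl⟩ := hp
  obtain ⟨q', hq', rfl⟩ := hq
  obtain ⟨h1, h2⟩ := h p' hp' q' hq'
  exact ⟨h1.symm, h2.symm⟩

lemma ok_unswap {L : List (A × B)} (h : Ok G₂ G₁ (L.map Prod.swap)) : Ok G₁ G₂ L := by
  have := ok_swap G₂ G₁ h
  simpa [List.map_map, Function.comp_def] using this

lemma ext_right (h₂ : G₂.HasPropR) {L : List (A × B)} (hL : Ok G₁ G₂ L) (a : A) :
    ∃ b, Ok G₁ G₂ ((a, b) :: L) := by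
  classical
  by_cases hmem : ∃ p ∈ L, p.1 = a
  · obtain ⟨p, hp, hpa⟩ := hmem
    refine ⟨p.2, ?_⟩
    have key : ∀ q ∈ (a, p.2) :: L, q ∈ L := by
      intro q hq
      rcases List.mem_cons.mp hq with rfl | h
      · rwa [show (a, p.2) = p from by rw [← hpa]] 
      · exact h
    exact fun q hq r hr => hL q (key q hq) r (key r hr)
  · push_neg at hmem
    set U : Finset B := (L.toFinset.filter (fun p => G₁.Adj a p.1)).image Prod.snd with hU
    set W : Finset B := (L.toFinset.filter (fun p => ¬ G₁.Adj a p.1)).image Prod.snd with hW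
    have hdisj : Disjoint U W := by
      rw [Finset.disjoint_left]
      intro b hbU hbW
      simp only [hU, hW, Finset.mem_image, Finset.mem_filter, List.mem_toFinset] at hbU hbW
      obtain ⟨p, ⟨hp, hpa⟩, hpb⟩ := hbU
      obtain ⟨q, ⟨hq, hqa⟩, hqb⟩ := hbW
      have := (hL p hp q hq).1
      have h1 : p.1 = q.1 := this.mpr (by rw [hpb, hqb])
      exact hqa (h1 ▸ hpa)
    obtain ⟨z, hz1, hz2, hz3, hz4⟩ := h₂ U W hdisj
    have hside : ∀ r ∈ L, (a = r.1 ↔ z = r.2) ∧ (G₁.Adj a r.1 ↔ G₂.Adj z r.2) := by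
      intro r hr
      constructor
      · constructor
        · intro h; exact absurd h.symm (hmem r hr)
        · intro h
          exfalso
          by_cases hadj : G₁.Adj a r.1
          · exact hz1 (h ▸ Finset.mem_image_of_mem _ (Finset.mem_filter.mpr
              ⟨List.mem_toFinset.mpr hr, hadj⟩))
          · exact hz2 (h ▸ Finset.mem_image_of_mem _ (Finset.mem_filter.mpr
              ⟨List.mem_toFinset.mpr hr, hadj⟩))
      · constructor
        · intro hadj
          exact hz3 _ (Finset.mem_image_of_mem _ (Finset.mem_filter.mpr
            ⟨List.mem_toFinset.mpr hr, hadj⟩))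
        · intro hadj
          by_contra hn
          exact hz4 _ (Finset.mem_image_of_mem _ (Finset.mem_filter.mpr
            ⟨List.mem_toFinset.mpr hr, hn⟩)) hadj
    refine ⟨z, ?_⟩
    intro q hq r hr
    rcases List.mem_cons.mp hq with rfl | hq'
    · rcases List.mem_cons.mp hr with rfl | hr'
      · exact ⟨by simp, iff_of_false (G₁.loopless.irrefl a) (G₂.loopless.irrefl z)⟩
      · exact hside r hr'
    · rcases List.mem_cons.mp hr with rfl | hr'
      · obtain ⟨e1, e2⟩ := hside q hq'
        exact ⟨⟨fun h => (e1.mp h.symm).symm, fun h => (e1.mpr h.symm).symm⟩,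
          (G₁.adj_comm q.1 a).trans (e2.trans (G₂.adj_comm z q.2))⟩
      · exact hL q hq' r hr'

lemma ext_left (h₁ : G₁.HasPropR) {L : List (A × B)} (hL : Ok G₁ G₂ L) (b : B) :
    ∃ a, Ok G₁ G₂ ((a, b) :: L) := by
  obtain ⟨a, ha⟩ := ext_right G₂ G₁ h₁ (ok_swap G₁ G₂ hL) b
  refine ⟨a, ok_unswap G₁ G₂ ?_⟩
  simpa using ha

variable (h₁ : G₁.HasPropR) (h₂ : G₂.HasPropR)

/-- One step of the back-and-forth: add `a` to the domain and `b` to the range. -/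
noncomputable def step (L : {L : List (A × B) // Ok G₁ G₂ L}) (a : A) (b : B) :
    {L' : List (A × B) // Ok G₁ G₂ L' ∧ L.1 ⊆ L' ∧ (∃ y, (a, y) ∈ L') ∧ (∃ x, (x, b) ∈ L')} := by
  have hb := ext_right G₁ G₂ h₂ L.2 a
  have ha := ext_left G₁ G₂ h₁ hb.choose_spec b
  exact ⟨(ha.choose, b) :: (a, hb.choose) :: L.1, ha.choose_spec,
    fun x hx => List.mem_cons_of_mem _ (List.mem_cons_of_mem _ hx),
    ⟨hb.choose, List.mem_cons_of_mem _ List.mem_cons_self⟩,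
    ⟨ha.choose, List.mem_cons_self⟩⟩

variable (eA : ℕ → A) (eB : ℕ → B)

noncomputable def chain : ℕ → {L : List (A × B) // Ok G₁ G₂ L}
  | 0 => ⟨[], fun p hp => absurd hp List.not_mem_nil⟩
  | (n+1) =>
      let s := step G₁ G₂ h₁ h₂ (chain n) (eA n) (eB n)
      ⟨s.1, s.2.1⟩

lemma chain_subset_succ (n : ℕ) :
    (chain G₁ G₂ h₁ h₂ eA eB n).1 ⊆ (chain G₁ G₂ h₁ h₂ eA eB (n+1)).1 := by
  intro x hx
  exact (step G₁ G₂ h₁ h₂ (chain G₁ G₂ h₁ h₂ eA eB n) (eA n) (eB n)).2.2.1 hx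

lemma chain_mono {n m : ℕ} (h : n ≤ m) :
    (chain G₁ G₂ h₁ h₂ eA eB n).1 ⊆ (chain G₁ G₂ h₁ h₂ eA eB m).1 := by
  induction m with
  | zero => simp [Nat.le_zero.mp h]
  | succ m ih =>
      rcases Nat.lt_or_ge n (m+1) with h' | h'
      · exact fun x hx => chain_subset_succ G₁ G₂ h₁ h₂ eA eB m (ih (Nat.lt_succ_iff.mp h') hx)
      · have : n = m + 1 := le_antisymm h h'
        subst this; exact fun x hx => hx

lemma chain_left (n : ℕ) : ∃ y, (eA n, y) ∈ (chain G₁ G₂ h₁ h₂ eA eB (n+1)).1 :=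
  (step G₁ G₂ h₁ h₂ (chain G₁ G₂ h₁ h₂ eA eB n) (eA n) (eB n)).2.2.2.1

lemma chain_right (n : ℕ) : ∃ x, (x, eB n) ∈ (chain G₁ G₂ h₁ h₂ eA eB (n+1)).1 :=
  (step G₁ G₂ h₁ h₂ (chain G₁ G₂ h₁ h₂ eA eB n) (eA n) (eB n)).2.2.2.2

lemma chain_ok {p q : A × B} {n m : ℕ} (hp : p ∈ (chain G₁ G₂ h₁ h₂ eA eB n).1)
    (hq : q ∈ (chain G₁ G₂ h₁ h₂ eA eB m).1) :
    (p.1 = q.1 ↔ p.2 = q.2) ∧ (G₁.Adj p.1 q.1 ↔ G₂.Adj p.2 q.2) := by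
  have hp' := chain_mono G₁ G₂ h₁ h₂ eA eB (le_max_left n m) hp
  have hq' := chain_mono G₁ G₂ h₁ h₂ eA eB (le_max_right n m) hq
  exact (chain G₁ G₂ h₁ h₂ eA eB (max n m)).2 p hp' q hq'


include h₁ h₂ in
theorem exists_iso (hA : Function.Surjective eA) (hB : Function.Surjective eB) :
    Nonempty (G₁ ≃g G₂) := by
  classical
  have hFa : ∀ a : A, ∃ b, ∃ n, (a, b) ∈ (chain G₁ G₂ h₁ h₂ eA eB n).1 := by
    intro a
    obtain ⟨k, rfl⟩ := hA a
    obtain ⟨y, hy⟩ := chain_left G₁ G₂ h₁ h₂ eA eB k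
    exact ⟨y, k+1, hy⟩
  have hGb : ∀ b : B, ∃ a, ∃ n, (a, b) ∈ (chain G₁ G₂ h₁ h₂ eA eB n).1 := by
    intro b
    obtain ⟨k, rfl⟩ := hB b
    obtain ⟨x, hx⟩ := chain_right G₁ G₂ h₁ h₂ eA eB k
    exact ⟨x, k+1, hx⟩
  set f : A → B := fun a => (hFa a).choose with hf
  set g : B → A := fun b => (hGb b).choose with hg
  have hfmem : ∀ a : A, ∃ n, (a, f a) ∈ (chain G₁ G₂ h₁ h₂ eA eB n).1 := fun a => (hFa a).choose_spec
  have hgmem : ∀ b : B, ∃ n, (g b, b) ∈ (chain G₁ G₂ h₁ h₂ eA eB n).1 := fun b => (hGb b).choose_spec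
  have key : ∀ p q : A × B, (∃ n, p ∈ (chain G₁ G₂ h₁ h₂ eA eB n).1) →
      (∃ m, q ∈ (chain G₁ G₂ h₁ h₂ eA eB m).1) →
      (p.1 = q.1 ↔ p.2 = q.2) ∧ (G₁.Adj p.1 q.1 ↔ G₂.Adj p.2 q.2) := by
    rintro p q ⟨n, hp⟩ ⟨m, hq⟩
    exact chain_ok G₁ G₂ h₁ h₂ eA eB hp hq
  have hgf : ∀ a, g (f a) = a := by
    intro a
    have := (key (g (f a), f a) (a, f a) (hgmem (f a)) (hfmem a)).1
    exact this.mpr rfl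
  have hfg : ∀ b, f (g b) = b := by
    intro b
    have := (key (g b, f (g b)) (g b, b) (hfmem (g b)) (hgmem b)).1
    exact this.mp rfl
  refine ⟨⟨⟨f, g, hgf, hfg⟩, ?_⟩⟩
  intro a b
  exact ((key (a, f a) (b, f b) (hfmem a) (hfmem b)).2).symm

end BackForth


variable {Γ : Type*} [Group Γ]

/-- The graph on `Γ × ℕ` determined by the data `e`. -/
def myGraph (e : ℕ → Finset (Γ × ℕ)) : SimpleGraph (Γ × ℕ) where
  Adj u v := (u.2 < v.2 ∧ (v.1⁻¹ * u.1, u.2) ∈ e v.2) ∨ (v.2 < u.2 ∧ (u.1⁻¹ * v.1, v.2) ∈ e u.2)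
  symm := ⟨by intro u v h; rcases h with h | h; exacts [Or.inr h, Or.inl h]⟩
  loopless := ⟨by intro u h; rcases h with ⟨h, -⟩ | ⟨h, -⟩ <;> exact lt_irrefl _ h⟩

lemma myGraph_adj (e : ℕ → Finset (Γ × ℕ)) (u v : Γ × ℕ) :
    (myGraph e).Adj u v ↔
      (u.2 < v.2 ∧ (v.1⁻¹ * u.1, u.2) ∈ e v.2) ∨ (v.2 < u.2 ∧ (u.1⁻¹ * v.1, v.2) ∈ e u.2) :=
  Iff.rfl

/-- The shift action of `Γ` on `myGraph e`. -/
def shiftIso (e : ℕ → Finset (Γ × ℕ)) (g : Γ) : myGraph e ≃g myGraph e where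
  toFun u := (g * u.1, u.2)
  invFun u := (g⁻¹ * u.1, u.2)
  left_inv u := by simp
  right_inv u := by simp
  map_rel_iff' := by
    intro u v
    have h : ∀ a b : Γ, b⁻¹ * g⁻¹ * (g * a) = b⁻¹ * a := by intro a b; group
    simp only [Equiv.coe_fn_mk, myGraph_adj, mul_inv_rev, h]

/-- The shift action as a homomorphism. -/
noncomputable def rho0 (e : ℕ → Finset (Γ × ℕ)) : Γ →* (myGraph e ≃g myGraph e) :=
  MonoidHom.mk' (fun g => shiftIso e g) (by
    intro a b
    apply RelIso.ext
    intro x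
    show ((a * b) * x.1, x.2) = (a * (b * x.1), x.2)
    rw [mul_assoc])

@[simp] lemma rho0_apply (e : ℕ → Finset (Γ × ℕ)) (g : Γ) (u : Γ × ℕ) :
    rho0 e g u = (g * u.1, u.2) := rfl

lemma myGraph_nonsingular (e : ℕ → Finset (Γ × ℕ)) (g : Γ) (u : Γ × ℕ) :
    ¬ (myGraph e).Adj (rho0 e g u) u := by
  rw [rho0_apply, myGraph_adj]
  rintro (⟨h, -⟩ | ⟨h, -⟩) <;> exact lt_irrefl _ h

lemma myGraph_free (e : ℕ → Finset (Γ × ℕ)) (σ : Γ) (x : Γ × ℕ) (h : rho0 e σ x = x) :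
    σ = 1 := by
  rw [rho0_apply] at h
  have h1 : σ * x.1 = x.1 := congrArg Prod.fst h
  exact mul_right_cancel (show σ * x.1 = 1 * x.1 by rw [h1, one_mul])

variable (e : ℕ → Finset (Γ × ℕ)) (he : ∀ (A : Finset (Γ × ℕ)) (M : ℕ), ∃ N, M < N ∧ e N = A)

include he in
lemma myGraph_hasPropR : (myGraph e).HasPropR := by
  classical
  intro U W hdisj
  obtain ⟨N, hNM, hNe⟩ := he U ((U ∪ W).sup Prod.snd)
  have hlt : ∀ u ∈ U ∪ W, u.2 < N := fun u hu => lt_of_le_of_lt (Finset.le_sup hu) hNM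
  refine ⟨((1 : Γ), N), ?_, ?_, ?_, ?_⟩
  · intro h; exact lt_irrefl N (hlt _ (Finset.mem_union_left _ h))
  · intro h; exact lt_irrefl N (hlt _ (Finset.mem_union_right _ h))
  · intro u hu
    rw [myGraph_adj]
    refine Or.inr ⟨hlt _ (Finset.mem_union_left _ hu), ?_⟩
    simpa [hNe] using hu
  · intro w hw
    rw [myGraph_adj]
    rintro (⟨h, -⟩ | ⟨-, h⟩)
    · exact lt_irrefl N (lt_trans h (hlt _ (Finset.mem_union_right _ hw)))
    · simp only [inv_one, one_mul, hNe] at h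
      exact Finset.disjoint_right.mp hdisj hw (by simpa using h)

include he in
lemma myGraph_propF (Sf : Finset Γ) (F : Finset (Γ × ℕ)) (h1 : (1 : Γ) ∉ Sf) :
    ∃ x : Γ × ℕ, x ∉ F ∧ (∀ u ∈ F, ¬ (myGraph e).Adj x u) ∧ ∀ g ∈ Sf, rho0 e g x ≠ x := by
  obtain ⟨N, hNM, hNe⟩ := he ∅ (F.sup Prod.snd)
  have hlt : ∀ u ∈ F, u.2 < N := fun u hu => lt_of_le_of_lt (Finset.le_sup hu) hNM
  refine ⟨((1 : Γ), N), ?_, ?_, ?_⟩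
  · intro h; exact lt_irrefl N (hlt _ h)
  · intro u hu
    rw [myGraph_adj]
    rintro (⟨h, -⟩ | ⟨-, h⟩)
    · exact lt_irrefl N (lt_trans h (hlt _ hu))
    · rw [hNe] at h; exact absurd h (Finset.notMem_empty _)
  · intro g hg h
    rw [rho0_apply] at h
    have : g * 1 = 1 := congrArg Prod.fst h
    rw [mul_one] at this
    exact h1 (this ▸ hg)

lemma myGraph_disconnect (H : Subgroup Γ) (hH : Infinite H) (F : Finset (Γ × ℕ)) :
    ∃ h ∈ H, (∀ u ∈ F, rho0 e h u ∉ F) ∧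
      ∀ u ∈ F, ∀ v ∈ F, ¬ (myGraph e).Adj (rho0 e h u) v := by
  classical
  set Bad : Finset Γ := F.biUnion (fun u => F.biUnion (fun v =>
    insert (v.1 * u.1⁻¹)
      ((((e u.2 ∪ e v.2).image fun p => v.1 * p.1 * u.1⁻¹) ∪
        ((e u.2 ∪ e v.2).image fun p => v.1 * p.1⁻¹ * u.1⁻¹))))) with hBad
  have hinf : ((H : Set Γ) \ ↑Bad).Infinite :=
    Set.Infinite.diff (Set.infinite_coe_iff.mp hH) (Bad.finite_toSet)
  obtain ⟨h, hhH, hhB⟩ := hinf.nonempty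
  have hmemBad : ∀ u ∈ F, ∀ v ∈ F, ∀ x : Γ,
      (x = v.1 * u.1⁻¹ ∨ (∃ p ∈ e u.2 ∪ e v.2, x = v.1 * p.1 * u.1⁻¹) ∨
        (∃ p ∈ e u.2 ∪ e v.2, x = v.1 * p.1⁻¹ * u.1⁻¹)) → x ∈ Bad := by
    intro u hu v hv x hx
    rw [hBad]
    refine Finset.mem_biUnion.mpr ⟨u, hu, Finset.mem_biUnion.mpr ⟨v, hv, ?_⟩⟩
    rcases hx with rfl | ⟨p, hp, rfl⟩ | ⟨p, hp, rfl⟩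
    · exact Finset.mem_insert_self _ _
    · exact Finset.mem_insert_of_mem (Finset.mem_union_left _ (Finset.mem_image_of_mem _ hp))
    · exact Finset.mem_insert_of_mem (Finset.mem_union_right _ (Finset.mem_image_of_mem _ hp))
  refine ⟨h, hhH, ?_, ?_⟩
  · intro u hu hmem
    rw [rho0_apply] at hmem
    apply hhB
    refine hmemBad u hu _ hmem h (Or.inl ?_)
    show h = (h * u.1) * u.1⁻¹
    group
  · intro u hu v hv hadj
    rw [rho0_apply, myGraph_adj] at hadj
    apply hhB
    rcases hadj with ⟨-, h2⟩ | ⟨-, h2⟩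
    · refine hmemBad u hu v hv h (Or.inr (Or.inl ⟨_, Finset.mem_union_right _ h2, ?_⟩))
      show h = v.1 * (v.1⁻¹ * (h * u.1)) * u.1⁻¹
      group
    · refine hmemBad u hu v hv h (Or.inr (Or.inr ⟨_, Finset.mem_union_left _ h2, ?_⟩))
      show h = v.1 * ((h * u.1)⁻¹ * v.1)⁻¹ * u.1⁻¹
      group

omit he

lemma myGraph_hcf (S' H' : Subgroup Γ) (hle : S' ≤ H')
    (hcf : (S'.subgroupOf H').HighlyCoreFree) (F : Finset (Γ × ℕ)) :
    ∃ g ∈ H',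
      (∀ u ∈ F, ∀ v ∈ F, ∀ σ ∈ S', rho0 e g u ≠ rho0 e σ v) ∧
      (∀ u ∈ F, ∀ v ∈ F, ¬ (myGraph e).Adj (rho0 e g u) v) ∧
      (∀ u ∈ F, ∀ v ∈ F, u ≠ v → ∀ σ ∈ S', ∀ τ ∈ S',
        rho0 e σ (rho0 e g u) ≠ rho0 e τ (rho0 e g v)) ∧
      (∀ u ∈ F, ∀ v ∈ F, ∀ σ ∈ S', σ ≠ 1 →
        ¬ (myGraph e).Adj (rho0 e σ (rho0 e g u)) (rho0 e g v)) := by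
  classical
  set T : Finset ℕ := F.image Prod.snd with hT
  set X : Finset Γ := F.image Prod.fst with hX
  set B0 : Finset Γ := (T.biUnion e).image Prod.fst with hB0
  set B : Finset Γ := insert 1 B0 with hB
  set E : Finset Γ := (X ×ˢ B).image (fun p => p.1 * p.2) with hE
  have hXF : ∀ u ∈ F, u.1 ∈ X := fun u hu => Finset.mem_image_of_mem _ hu
  have hTF : ∀ u ∈ F, u.2 ∈ T := fun u hu => Finset.mem_image_of_mem _ hu
  have hXE : ∀ x ∈ X, x ∈ E := by
    intro x hx
    exact Finset.mem_image.mpr ⟨(x, 1), Finset.mem_product.mpr ⟨hx, Finset.mem_insert_self _ _⟩,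
      mul_one x⟩
  have hXBE : ∀ x ∈ X, ∀ w ∈ B0, x * w ∈ E := by
    intro x hx w hw
    exact Finset.mem_image.mpr ⟨(x, w), Finset.mem_product.mpr ⟨hx, Finset.mem_insert_of_mem hw⟩,
      rfl⟩
  have hB0mem : ∀ (w : Γ) (n m : ℕ), m ∈ T → (w, n) ∈ e m → w ∈ B0 := by
    intro w n m hm hwm
    exact Finset.mem_image.mpr ⟨(w, n), Finset.mem_biUnion.mpr ⟨m, hm, hwm⟩, rfl⟩
  -- coset representatives
  set rep : Γ → Γ := fun a => (Quotient.mk (QuotientGroup.rightRel H') a).out with hrep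
  have hrep_spec : ∀ a : Γ, a * (rep a)⁻¹ ∈ H' := by
    intro a
    have h0 : QuotientGroup.rightRel H' (rep a) a :=
      Quotient.exact (Quotient.out_eq (Quotient.mk (QuotientGroup.rightRel H') a))
    exact (QuotientGroup.rightRel_apply).mp h0
  have hrep_eq : ∀ a b : Γ, (∃ h ∈ H', h * a = b) → rep a = rep b := by
    rintro a b ⟨h, hh, rfl⟩
    have h0 : QuotientGroup.rightRel H' a (h * a) :=
      (QuotientGroup.rightRel_apply).mpr (by simpa using hh)
    simp only [hrep]
    rw [Quotient.sound h0]
  set hc : Γ → H' := fun a => ⟨a * (rep a)⁻¹, hrep_spec a⟩ with hhc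
  have hc_decomp : ∀ a : Γ, (hc a : Γ) * rep a = a := by
    intro a; simp [hhc]
  set F' : Finset H' := E.image hc with hF'
  obtain ⟨g, hg1, hg2⟩ := hcf F'
  have keyA : ∀ u v h k : Γ, h ∈ H' → k ∈ H' → h * u = k * v →
      rep u = rep v ∧ h * (hc u : Γ) = k * (hc v : Γ) := by
    intro u v h k hh hk heq
    have hr : rep u = rep v := by
      refine hrep_eq u v ⟨k⁻¹ * h, mul_mem (inv_mem hk) hh, ?_⟩
      rw [mul_assoc, heq, ← mul_assoc, inv_mul_cancel, one_mul]
    refine ⟨hr, ?_⟩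
    have h1 : h * (hc u : Γ) * rep u = k * (hc v : Γ) * rep v := by
      rw [mul_assoc, hc_decomp, mul_assoc, hc_decomp]; exact heq
    rw [hr] at h1
    exact mul_right_cancel h1
  have P1 : ∀ u ∈ E, ∀ v ∈ E, ∀ σ ∈ S', (g : Γ) * u ≠ σ * v := by
    intro u hu v hv σ hσ heq
    obtain ⟨hr, heq'⟩ := keyA u v (g : Γ) σ g.2 (hle hσ) heq
    refine hg1 (hc u) (Finset.mem_image_of_mem _ hu) (hc v) (Finset.mem_image_of_mem _ hv)
      ⟨σ, hle hσ⟩ (Subgroup.mem_subgroupOf.mpr hσ) ?_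
    exact Subtype.ext heq'
  have P2 : ∀ u ∈ E, ∀ v ∈ E, u ≠ v → ∀ σ ∈ S', ∀ τ ∈ S',
      σ * ((g : Γ) * u) ≠ τ * ((g : Γ) * v) := by
    intro u hu v hv huv σ hσ τ hτ heq
    rw [← mul_assoc, ← mul_assoc] at heq
    obtain ⟨hr, heq'⟩ := keyA u v (σ * g) (τ * g) (mul_mem (hle hσ) g.2) (mul_mem (hle hτ) g.2) heq
    have hne : hc u ≠ hc v := by
      intro hcc
      apply huv
      rw [← hc_decomp u, ← hc_decomp v, hcc, hr]
    refine hg2 (hc u) (Finset.mem_image_of_mem _ hu) (hc v) (Finset.mem_image_of_mem _ hv) hne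
      ⟨σ, hle hσ⟩ (Subgroup.mem_subgroupOf.mpr hσ) ⟨τ, hle hτ⟩ (Subgroup.mem_subgroupOf.mpr hτ) ?_
    apply Subtype.ext
    simp only [MulMemClass.coe_mul, ← mul_assoc]
    exact heq'
  refine ⟨(g : Γ), g.2, ?_, ?_, ?_, ?_⟩
  · intro u hu v hv σ hσ heq
    rw [rho0_apply, rho0_apply, Prod.mk.injEq] at heq
    exact P1 u.1 (hXE _ (hXF u hu)) v.1 (hXE _ (hXF v hv)) σ hσ heq.1
  · intro u hu v hv hadj
    rw [rho0_apply, myGraph_adj] at hadj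
    rcases hadj with ⟨-, h2⟩ | ⟨-, h2⟩
    · have hw : (v.1⁻¹ * ((g : Γ) * u.1)) ∈ B0 := hB0mem _ u.2 v.2 (hTF v hv) h2
      refine P1 u.1 (hXE _ (hXF u hu)) (v.1 * (v.1⁻¹ * ((g : Γ) * u.1)))
        (hXBE _ (hXF v hv) _ hw) 1 (one_mem S') ?_
      group
    · have hw : (((g : Γ) * u.1)⁻¹ * v.1) ∈ B0 := hB0mem _ v.2 u.2 (hTF u hu) h2
      refine P1 (u.1 * (((g : Γ) * u.1)⁻¹ * v.1)) (hXBE _ (hXF u hu) _ hw) v.1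
        (hXE _ (hXF v hv)) 1 (one_mem S') ?_
      group
  · intro u hu v hv huv σ hσ τ hτ heq
    rw [rho0_apply, rho0_apply, rho0_apply, rho0_apply, Prod.mk.injEq] at heq
    have hne : u.1 ≠ v.1 := by
      intro h1
      exact huv (Prod.ext h1 heq.2)
    exact P2 u.1 (hXE _ (hXF u hu)) v.1 (hXE _ (hXF v hv)) hne σ hσ τ hτ heq.1
  · intro u hu v hv σ hσ hσ1 hadj
    rw [rho0_apply, rho0_apply, rho0_apply, myGraph_adj] at hadj
    rcases hadj with ⟨-, h2⟩ | ⟨-, h2⟩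
    · set w : Γ := ((g : Γ) * v.1)⁻¹ * (σ * ((g : Γ) * u.1)) with hwdef
      have hw : w ∈ B0 := hB0mem _ u.2 v.2 (hTF v hv) h2
      have hiden : σ * ((g : Γ) * u.1) = (g : Γ) * (v.1 * w) := by rw [hwdef]; group
      by_cases hcase : u.1 = v.1 * w
      · apply hσ1
        rw [hcase] at hiden
        exact mul_right_cancel (show σ * ((g:Γ) * (v.1 * w)) = 1 * ((g:Γ) * (v.1 * w)) by
          rw [hiden, one_mul])
      · exact P2 u.1 (hXE _ (hXF u hu)) (v.1 * w) (hXBE _ (hXF v hv) _ hw) hcase σ hσ 1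
          (one_mem S') (by rw [one_mul]; exact hiden)
    · set w : Γ := (σ * ((g : Γ) * u.1))⁻¹ * ((g : Γ) * v.1) with hwdef
      have hw : w ∈ B0 := hB0mem _ v.2 u.2 (hTF u hu) h2
      have hiden : σ * ((g : Γ) * (u.1 * w)) = (g : Γ) * v.1 := by rw [hwdef]; group
      by_cases hcase : v.1 = u.1 * w
      · apply hσ1
        rw [hcase] at hiden
        exact mul_right_cancel (show σ * ((g:Γ) * (u.1 * w)) = 1 * ((g:Γ) * (u.1 * w)) by
          rw [hiden, one_mul])
      · exact P2 (u.1 * w) (hXBE _ (hXF u hu) _ hw) v.1 (hXE _ (hXF v hv))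
          (fun h => hcase h.symm) σ hσ 1 (one_mem S')
          (by rw [one_mul]; exact hiden.symm ▸ hiden)


end ExistsNiceRelAction

open ExistsNiceRelAction

/-- Given a finite subgroup `S` of an infinite countable group `Γ`, there is a
non-singular action of `Γ` with property (F) on any countable graph with property (R)
such that `S` acts freely, every infinite subgroup disconnects the finite sets, and
highly core-free pairs of subgroups are highly core-free with respect to the
restricted action. -/
theorem exists_nice_relative_action {Γ : Type*} [Group Γ] [Countable Γ] [Infinite Γ]
    (S : Subgroup Γ) [Finite S] {V : Type*} [Countable V]
    (R : SimpleGraph V) (hR : R.HasPropR) :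
    ∃ ρ : Γ →* (R ≃g R),
      NonSingularAction R ρ ∧ PropertyF R ρ ∧
      (∀ σ ∈ S, ∀ x : V, ρ σ x = x → σ = 1) ∧
      (∀ H : Subgroup Γ, Infinite H →
        ∀ F : Finset V, ∃ h ∈ H, (∀ u ∈ F, ρ h u ∉ F) ∧
          ∀ u ∈ F, ∀ v ∈ F, ¬ R.Adj (ρ h u) v) ∧
      (∀ S' H' : Subgroup Γ, S' ≤ H' → (S'.subgroupOf H').HighlyCoreFree →
        HighlyCoreFreeWrt R ρ S' H') := by
  classical
  obtain ⟨s, hs⟩ := exists_surjective_nat (Finset (Γ × ℕ))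
  set e : ℕ → Finset (Γ × ℕ) := fun n => s (Nat.unpair n).1 with he_def
  have he : ∀ (A : Finset (Γ × ℕ)) (M : ℕ), ∃ N, M < N ∧ e N = A := by
    intro A M
    obtain ⟨k, hk⟩ := hs A
    refine ⟨Nat.pair k (M + 1),
      lt_of_lt_of_le (Nat.lt_succ_self M) (Nat.right_le_pair k (M + 1)), ?_⟩
    simp [he_def, Nat.unpair_pair, hk]
  have hprop := myGraph_hasPropR e he
  have hVne : Nonempty V := by
    obtain ⟨z, -⟩ := hR ∅ ∅ (by simp)
    exact ⟨z⟩
  obtain ⟨eA, hA⟩ := exists_surjective_nat (Γ × ℕ)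
  obtain ⟨eB, hB⟩ := exists_surjective_nat V
  obtain ⟨φ⟩ := exists_iso (myGraph e) R hprop hR eA eB hA hB
  have mulkey : ∀ (a b : Γ) (x : Γ × ℕ), rho0 e (a * b) x = rho0 e a (rho0 e b x) := by
    intro a b x; simp [mul_assoc]
  set ρf : Γ → (R ≃g R) := fun g => (φ.symm.trans (rho0 e g)).trans φ with hρfdef
  have hρf : ∀ (g : Γ) (x : Γ × ℕ), ρf g (φ x) = φ (rho0 e g x) := by
    intro g x
    simp [hρfdef, RelIso.trans_apply]
  set ρ : Γ →* (R ≃g R) := MonoidHom.mk' ρf (by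
    intro a b
    apply RelIso.ext
    intro x
    show φ (rho0 e (a * b) (φ.symm x)) = (ρf a) ((ρf b) x)
    simp [hρfdef, RelIso.trans_apply, mulkey]) with hρdef
  have hρ : ∀ (g : Γ) (x : Γ × ℕ), ρ g (φ x) = φ (rho0 e g x) := hρf
  have key : ∀ (a : Γ) (u : V), ρ a u = φ (rho0 e a (φ.symm u)) := by
    intro a u; rw [← hρ, φ.apply_symm_apply]
  refine ⟨ρ, ?_, ?_, ?_, ?_, ?_⟩
  · -- non-singular
    intro g u
    have hu : u = φ (φ.symm u) := (φ.apply_symm_apply u).symm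
    rw [hu, hρ, φ.map_rel_iff]
    exact myGraph_nonsingular e g _
  · -- property (F)
    intro Sf F h1
    set F0 : Finset (Γ × ℕ) := F.image (fun v => φ.symm v) with hF0
    obtain ⟨x, hx1, hx2, hx3⟩ := myGraph_propF e he Sf F0 h1
    refine ⟨φ x, ?_, ?_, ?_⟩
    · intro h
      exact hx1 (Finset.mem_image.mpr ⟨φ x, h, φ.symm_apply_apply x⟩)
    · intro u hu
      have h2 : u = φ (φ.symm u) := (φ.apply_symm_apply u).symm
      rw [h2, φ.map_rel_iff]
      exact hx2 _ (Finset.mem_image_of_mem _ hu)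
    · intro g hg h
      apply hx3 g hg
      apply φ.injective
      rw [← hρ g x, h]
  · -- S acts freely
    intro σ _ x h
    have hx : x = φ (φ.symm x) := (φ.apply_symm_apply x).symm
    rw [hx, hρ] at h
    exact myGraph_free e σ (φ.symm x) (φ.injective h)
  · -- infinite subgroups disconnect finite sets
    intro H hH F
    set F0 : Finset (Γ × ℕ) := F.image (fun v => φ.symm v) with hF0
    obtain ⟨h, hhH, hd1, hd2⟩ := myGraph_disconnect e H hH F0
    refine ⟨h, hhH, ?_, ?_⟩
    · intro u hu hmem
      apply hd1 (φ.symm u) (Finset.mem_image_of_mem _ hu)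
      have h1 : φ.symm (ρ h u) ∈ F0 := Finset.mem_image_of_mem _ hmem
      rwa [key, φ.symm_apply_apply] at h1
    · intro u hu v hv
      have h2 : v = φ (φ.symm v) := (φ.apply_symm_apply v).symm
      rw [key, h2, φ.map_rel_iff]
      exact hd2 _ (Finset.mem_image_of_mem _ hu) _ (Finset.mem_image_of_mem _ hv)
  · -- highly core-free pairs
    intro S' H' hle hcf F
    set F0 : Finset (Γ × ℕ) := F.image (fun v => φ.symm v) with hF0
    obtain ⟨g, hgH, c1, c2, c3, c4⟩ := myGraph_hcf e S' H' hle hcf F0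
    have hmem : ∀ u ∈ F, φ.symm u ∈ F0 := fun u hu => Finset.mem_image_of_mem _ hu
    refine ⟨g, hgH, ?_, ?_, ?_, ?_⟩
    · intro u hu v hv σ hσ heq
      rw [key, key] at heq
      exact c1 _ (hmem u hu) _ (hmem v hv) σ hσ (φ.injective heq)
    · intro u hu v hv
      have h2 : v = φ (φ.symm v) := (φ.apply_symm_apply v).symm
      rw [key, h2, φ.map_rel_iff]
      exact c2 _ (hmem u hu) _ (hmem v hv)
    · intro u hu v hv huv σ hσ τ hτ heq
      have huv0 : φ.symm u ≠ φ.symm v := by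
        intro hh
        exact huv (by rw [← φ.apply_symm_apply u, hh, φ.apply_symm_apply])
      rw [key g u, key g v, hρ σ _, hρ τ _] at heq
      exact c3 _ (hmem u hu) _ (hmem v hv) huv0 σ hσ τ hτ (φ.injective heq)
    · intro u hu v hv σ hσ hσ1 hadj
      rw [key g u, key g v, hρ σ _, φ.map_rel_iff] at hadj
      exact c4 _ (hmem u hu) _ (hmem v hv) σ hσ hσ1 hadj
end
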